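/- arXiv:1103.4687 — 5 statements merged into one kernel-verified Lean document; each statement's English description precedes it below -/
import Mathlib

section
/- Let X and Y be independent nonnegative real random variables with common cumulative distribution function F, where F is continuous, F(0) = 0, and F has a density f with support [0,∞). Let 0 ≤ c < τ₁ ≤ τ₂. Then E[ log(1 + max( X·1{X ≥ τ₁}, Y·1{Y ≥ τ₂}, c )) ] = ∫_{τ₂}^{∞} log(1+x)·2F(x)f(x) dx + F(τ₂)·∫_{τ₁}^{τ₂} log(1+x)·f(x) dx + log(1+c)·F(τ₁)·F(τ₂). -/
/-!
STATEMENT 2 (Lemma 3 of the paper): if `0 ≤ c < τ₁ ≤ τ₂`, then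
`E[log(1 + max(X·1{X ≥ τ₁}, Y·1{Y ≥ τ₂}, c))]
  = ∫_{τ₂}^{∞} log(1+x)·2F(x)f(x) dx + F(τ₂)·∫_{τ₁}^{τ₂} log(1+x)·f(x) dx
    + log(1+c)·F(τ₁)·F(τ₂)`.
-/

open MeasureTheory ProbabilityTheory
open scoped ENNReal NNReal

private noncomputable def rbbtD1 (τ₂ : ℝ) (p : ℝ × ℝ) : ℝ :=
  if τ₂ < p.1 ∧ p.2 ≤ p.1 then Real.log (1 + p.1) else 0

private noncomputable def rbbtD2 (τ₂ : ℝ) (p : ℝ × ℝ) : ℝ :=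
  if τ₂ < p.2 ∧ p.1 ≤ p.2 then Real.log (1 + p.2) else 0

private noncomputable def rbbtG2 (τ₁ τ₂ : ℝ) (p : ℝ × ℝ) : ℝ :=
  if τ₁ < p.1 ∧ p.1 ≤ τ₂ ∧ p.2 ≤ τ₂ then Real.log (1 + p.1) else 0

private noncomputable def rbbtG3 (τ₁ τ₂ c : ℝ) (p : ℝ × ℝ) : ℝ :=
  if p.1 ≤ τ₁ ∧ p.2 ≤ τ₂ then Real.log (1 + c) else 0

private lemma rbbtD1_meas (τ₂ : ℝ) : Measurable (rbbtD1 τ₂) :=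
  Measurable.ite ((measurableSet_lt measurable_const measurable_fst).inter
      (measurableSet_le measurable_snd measurable_fst))
    (Real.measurable_log.comp (measurable_const.add measurable_fst)) measurable_const

private lemma rbbtD2_meas (τ₂ : ℝ) : Measurable (rbbtD2 τ₂) :=
  Measurable.ite ((measurableSet_lt measurable_const measurable_snd).inter
      (measurableSet_le measurable_fst measurable_snd))
    (Real.measurable_log.comp (measurable_const.add measurable_snd)) measurable_const

private lemma rbbtG2_meas (τ₁ τ₂ : ℝ) : Measurable (rbbtG2 τ₁ τ₂) :=
  Measurable.ite ((measurableSet_lt measurable_const measurable_fst).inter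
      ((measurableSet_le measurable_fst measurable_const).inter
        (measurableSet_le measurable_snd measurable_const)))
    (Real.measurable_log.comp (measurable_const.add measurable_fst)) measurable_const

private lemma rbbtG3_meas (τ₁ τ₂ c : ℝ) : Measurable (rbbtG3 τ₁ τ₂ c) :=
  Measurable.ite ((measurableSet_le measurable_fst measurable_const).inter
      (measurableSet_le measurable_snd measurable_const)) measurable_const measurable_const

private lemma rbbt_ptws {τ₁ τ₂ c x y : ℝ} (hc0 : 0 ≤ c) (hcτ₁ : c < τ₁) (hτ₁₂ : τ₁ ≤ τ₂)
    (hx0 : 0 ≤ x) (hy0 : 0 ≤ y) (hx1 : x ≠ τ₁) (hx2 : x ≠ τ₂) (hy2 : y ≠ τ₂) (hxy : x ≠ y) :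
    Real.log (1 + max (max (if τ₁ ≤ x then x else 0) (if τ₂ ≤ y then y else 0)) c)
      = ((if τ₂ < x ∧ y ≤ x then Real.log (1 + x) else 0)
        + (if τ₂ < y ∧ x ≤ y then Real.log (1 + y) else 0)
        + (if τ₁ < x ∧ x ≤ τ₂ ∧ y ≤ τ₂ then Real.log (1 + x) else 0)
        + (if x ≤ τ₁ ∧ y ≤ τ₂ then Real.log (1 + c) else 0)) := by
  rcases hx1.lt_or_gt with hxτ₁ | hxτ₁
  · rw [if_neg (not_le.mpr hxτ₁)]
    rcases hy2.lt_or_gt with hyτ₂ | hyτ₂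
    · rw [if_neg (not_le.mpr hyτ₂), if_neg (by rintro ⟨h, -⟩; linarith),
        if_neg (by rintro ⟨h, -⟩; linarith), if_neg (by rintro ⟨h, -⟩; linarith),
        if_pos ⟨hxτ₁.le, hyτ₂.le⟩, max_self, max_eq_right hc0]
      ring
    · rw [if_pos hyτ₂.le, max_eq_right hy0,
        max_eq_left (by linarith : c ≤ y),
        if_neg (by rintro ⟨h, -⟩; linarith),
        if_pos ⟨hyτ₂, by linarith⟩,
        if_neg (by rintro ⟨h, -⟩; linarith),
        if_neg (by rintro ⟨-, h⟩; linarith)]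
      ring
  · rw [if_pos hxτ₁.le]
    rcases hx2.lt_or_gt with hxτ₂ | hxτ₂
    · rcases hy2.lt_or_gt with hyτ₂ | hyτ₂
      · rw [if_neg (not_le.mpr hyτ₂), max_eq_left hx0,
          max_eq_left (by linarith : c ≤ x),
          if_neg (by rintro ⟨h, -⟩; linarith),
          if_neg (by rintro ⟨h, -⟩; linarith),
          if_pos ⟨hxτ₁, hxτ₂.le, hyτ₂.le⟩,
          if_neg (by rintro ⟨h, -⟩; linarith)]
        ring
      · rw [if_pos hyτ₂.le, max_eq_right (by linarith : x ≤ y),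
          max_eq_left (by linarith : c ≤ y),
          if_neg (by rintro ⟨-, h⟩; linarith),
          if_pos ⟨hyτ₂, by linarith⟩,
          if_neg (by rintro ⟨-, -, h⟩; linarith),
          if_neg (by rintro ⟨h, -⟩; linarith)]
        ring
    · rcases hy2.lt_or_gt with hyτ₂ | hyτ₂
      · rw [if_neg (not_le.mpr hyτ₂), max_eq_left hx0,
          max_eq_left (by linarith : c ≤ x),
          if_pos ⟨hxτ₂, by linarith⟩,
          if_neg (by rintro ⟨h, -⟩; linarith),
          if_neg (by rintro ⟨-, h, -⟩; linarith),
          if_neg (by rintro ⟨h, -⟩; linarith)]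
        ring
      · rw [if_pos hyτ₂.le]
        rcases hxy.lt_or_gt with hlt | hlt
        · rw [max_eq_right hlt.le, max_eq_left (by linarith : c ≤ y),
            if_neg (by rintro ⟨-, h⟩; linarith),
            if_pos ⟨hyτ₂, hlt.le⟩,
            if_neg (by rintro ⟨-, h, -⟩; linarith),
            if_neg (by rintro ⟨h, -⟩; linarith)]
          ring
        · rw [max_eq_left hlt.le, max_eq_left (by linarith : c ≤ x),
            if_pos ⟨hxτ₂, hlt.le⟩,
            if_neg (by rintro ⟨-, h⟩; linarith),
            if_neg (by rintro ⟨-, h, -⟩; linarith),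
            if_neg (by rintro ⟨h, -⟩; linarith)]
          ring

theorem rate_below_both_thresholds
    {Ω : Type*} [MeasurableSpace Ω] (μ : Measure Ω) [IsProbabilityMeasure μ]
    (X Y : Ω → ℝ) (hXm : Measurable X) (hYm : Measurable Y)
    (hX0 : ∀ ω, 0 ≤ X ω) (hY0 : ∀ ω, 0 ≤ Y ω)
    (hindep : IndepFun X Y μ)
    (F f : ℝ → ℝ)
    (hFX : ∀ x, F x = (μ {ω | X ω ≤ x}).toReal)
    (hFY : ∀ x, F x = (μ {ω | Y ω ≤ x}).toReal)
    (hFcont : Continuous F) (hF0 : F 0 = 0)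
    (hFdens : ∀ x, F x = ∫ t in Set.Iic x, f t)
    (hfpos : ∀ x, 0 ≤ x → 0 < f x) (hfneg : ∀ x, x < 0 → f x = 0)
    (hInt : Integrable (fun ω => Real.log (1 + max (X ω) (Y ω))) μ)
    (τ₁ τ₂ c : ℝ) (hc0 : 0 ≤ c) (hcτ₁ : c < τ₁) (hτ₁₂ : τ₁ ≤ τ₂) :
    ∫ ω, Real.log (1 + max (max (if τ₁ ≤ X ω then X ω else 0)
        (if τ₂ ≤ Y ω then Y ω else 0)) c) ∂μ
      = (∫ x in Set.Ioi τ₂, Real.log (1 + x) * (2 * F x * f x))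
        + F τ₂ * (∫ x in τ₁..τ₂, Real.log (1 + x) * f x)
        + Real.log (1 + c) * F τ₁ * F τ₂ := by
  classical
  have hF_nonneg : ∀ a, 0 ≤ F a := fun a => by rw [hFX]; exact ENNReal.toReal_nonneg
  have hF_le_one : ∀ a, F a ≤ 1 := by
    intro a
    rw [hFX]
    have h := ENNReal.toReal_mono (measure_ne_top μ Set.univ)
      (measure_mono (Set.subset_univ {ω | X ω ≤ a}))
    simpa using h
  have hFmono : Monotone F := by
    intro a b hab
    rw [hFX, hFX]
    exact ENNReal.toReal_mono (measure_ne_top μ _) (measure_mono fun ω h => le_trans h hab)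
  have hf_nonneg : ∀ x, 0 ≤ f x := by
    intro x
    rcases le_or_gt 0 x with h | h
    · exact (hfpos x h).le
    · rw [hfneg x h]
  set ν : Measure ℝ := μ.map X with hν_def
  haveI hνprob : IsProbabilityMeasure ν := Measure.isProbabilityMeasure_map hXm.aemeasurable
  have hν_Iic : ∀ a, ν (Set.Iic a) = ENNReal.ofReal (F a) := by
    intro a
    rw [hν_def, Measure.map_apply hXm measurableSet_Iic]
    have h : X ⁻¹' Set.Iic a = {ω | X ω ≤ a} := rfl
    rw [h, hFX, ENNReal.ofReal_toReal (measure_ne_top μ _)]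
  have hνIic_toReal : ∀ a, (ν (Set.Iic a)).toReal = F a := by
    intro a; rw [hν_Iic, ENNReal.toReal_ofReal (hF_nonneg a)]
  have hYmap : μ.map Y = ν := by
    haveI : IsProbabilityMeasure (μ.map Y) := Measure.isProbabilityMeasure_map hYm.aemeasurable
    refine Measure.ext_of_Iic (μ.map Y) ν fun a => ?_
    rw [Measure.map_apply hYm measurableSet_Iic, hν_Iic]
    have h : Y ⁻¹' Set.Iic a = {ω | Y ω ≤ a} := rfl
    rw [h, hFY, ENNReal.ofReal_toReal (measure_ne_top μ _)]
  have hν_Iio0 : ν (Set.Iio 0) = 0 := by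
    rw [hν_def, Measure.map_apply hXm measurableSet_Iio]
    have h : X ⁻¹' Set.Iio 0 = ∅ :=
      Set.eq_empty_iff_forall_notMem.mpr fun ω h => absurd h (not_lt.mpr (hX0 ω))
    rw [h, measure_empty]
  have hν_atom : ∀ a : ℝ, ν {a} = 0 := by
    intro a
    have key : ∀ b, b < a → ν {a} ≤ ENNReal.ofReal (F a - F b) := by
      intro b hb
      have h1 : ν {a} ≤ ν (Set.Ioc b a) := by
        refine measure_mono ?_
        intro z hz
        rw [Set.mem_singleton_iff] at hz
        subst hz
        exact ⟨hb, le_rfl⟩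
      have h2 : ν (Set.Ioc b a) = ν (Set.Iic a) - ν (Set.Iic b) := by
        rw [← Set.Iic_sdiff_Iic,
          measure_diff (Set.Iic_subset_Iic.mpr hb.le) nullMeasurableSet_Iic (measure_ne_top ν _)]
      rw [h2, hν_Iic, hν_Iic, ← ENNReal.ofReal_sub _ (hF_nonneg b)] at h1
      exact h1
    have htend : Filter.Tendsto (fun n : ℕ => ENNReal.ofReal (F a - F (a - 1 / (n + 1))))
        Filter.atTop (nhds 0) := by
      have h1 : Filter.Tendsto (fun n : ℕ => a - 1 / ((n : ℝ) + 1)) Filter.atTop (nhds a) := by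
        have := Filter.Tendsto.const_sub a tendsto_one_div_add_atTop_nhds_zero_nat
        simpa using this
      have h2 : Filter.Tendsto (fun n : ℕ => F a - F (a - 1 / ((n : ℝ) + 1)))
          Filter.atTop (nhds 0) := by
        have h3 := (hFcont.tendsto a).comp h1
        have := Filter.Tendsto.const_sub (F a) h3
        simpa using this
      have h4 := ENNReal.tendsto_ofReal h2
      simpa using h4
    have hle : ν {a} ≤ 0 := by
      refine ge_of_tendsto' htend fun n => key _ ?_
      have : (0:ℝ) < 1 / ((n : ℝ) + 1) := by positivity
      linarith
    exact le_antisymm hle zero_le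
  -- integrability of f on half-lines and a measurable version
  have hFpos : ∃ n : ℕ, 0 < F n := by
    by_contra hcon
    push_neg at hcon
    have h0 : ∀ n : ℕ, μ {ω | X ω ≤ (n : ℝ)} = 0 := by
      intro n
      have h1 : F n = 0 := le_antisymm (hcon n) (hF_nonneg n)
      rw [hFX] at h1
      rcases ENNReal.toReal_eq_zero_iff _ |>.mp h1 with h | h
      · exact h
      · exact absurd h (measure_ne_top μ _)
    have huniv : μ Set.univ = 0 := by
      have hsub : Set.univ ⊆ ⋃ n : ℕ, {ω | X ω ≤ (n : ℝ)} := fun ω _ =>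
        Set.mem_iUnion.mpr ⟨⌈X ω⌉₊, show X ω ≤ _ from Nat.le_ceil _⟩
      have h2 : μ (⋃ n : ℕ, {ω | X ω ≤ (n : ℝ)}) ≤ ∑' n : ℕ, μ {ω | X ω ≤ (n : ℝ)} :=
        measure_iUnion_le _
      have := le_trans (measure_mono hsub) h2
      simpa [h0] using this
    have := measure_univ (μ := μ)
    rw [huniv] at this
    exact zero_ne_one this
  have hIntOn : ∀ a : ℝ, IntegrableOn f (Set.Iic a) := by
    intro a
    obtain ⟨n, hn⟩ := hFpos
    have hbig : IntegrableOn f (Set.Iic (max a n)) := by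
      by_contra hcon
      have h1 : F (max a n) = 0 := by rw [hFdens]; exact integral_undef hcon
      have h2 : 0 < F (max a (n : ℝ)) := lt_of_lt_of_le hn (hFmono (le_max_right a n))
      linarith
    exact hbig.mono_set (Set.Iic_subset_Iic.mpr (le_max_left a n))
  have hcover : (⋃ n : ℕ, Set.Iic ((n : ℝ))) = Set.univ := by
    ext z
    simp only [Set.mem_iUnion, Set.mem_Iic, Set.mem_univ, iff_true]
    exact ⟨⌈z⌉₊, Nat.le_ceil z⟩
  have hfaem : AEStronglyMeasurable f (volume.restrict (⋃ n : ℕ, Set.Iic ((n : ℝ)))) :=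
    aestronglyMeasurable_iUnion_iff.mpr fun n => (hIntOn (n : ℝ)).aestronglyMeasurable
  rw [hcover, Measure.restrict_univ] at hfaem
  set g : ℝ → ℝ := hfaem.mk f with hg_def
  have hgmeas : Measurable g := hfaem.stronglyMeasurable_mk.measurable
  have hfg : f =ᵐ[volume] g := hfaem.ae_eq_mk
  have hg_nonneg : ∀ᵐ x ∂(volume : Measure ℝ), 0 ≤ g x := by
    filter_upwards [hfg] with x hx
    rw [← hx]
    exact hf_nonneg x
  set φ : ℝ → NNReal := fun x => Real.toNNReal (g x) with hφ_def
  have hφmeas : Measurable φ := measurable_real_toNNReal.comp hgmeas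
  set κ : Measure ℝ := volume.withDensity (fun x => ((φ x : ℝ≥0∞))) with hκ_def
  have hκ_Iic : ∀ a, κ (Set.Iic a) = ENNReal.ofReal (F a) := by
    intro a
    rw [hκ_def, withDensity_apply _ measurableSet_Iic]
    have h1 : ∫⁻ x in Set.Iic a, ((φ x : ℝ≥0∞)) = ∫⁻ x in Set.Iic a, ENNReal.ofReal (f x) := by
      refine lintegral_congr_ae ?_
      filter_upwards [ae_restrict_of_ae hfg] with x hx
      rw [hφ_def, hx]
      rfl
    rw [h1, ← ofReal_integral_eq_lintegral_ofReal (hIntOn a)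
      (Filter.Eventually.of_forall fun x => hf_nonneg x), ← hFdens a]
  have hκ_fin : κ Set.univ ≤ 1 := by
    rw [← hcover]
    have hmono : Monotone fun n : ℕ => Set.Iic ((n : ℝ)) := fun m n h =>
      Set.Iic_subset_Iic.mpr (Nat.cast_le.mpr h)
    refine le_of_tendsto (tendsto_measure_iUnion_atTop (μ := κ) hmono)
      (Filter.Eventually.of_forall fun n => ?_)
    show κ (Set.Iic ((n : ℝ))) ≤ 1
    rw [hκ_Iic]
    rw [← ENNReal.ofReal_one]
    exact ENNReal.ofReal_le_ofReal (hF_le_one n)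
  haveI : IsFiniteMeasure κ := ⟨lt_of_le_of_lt hκ_fin ENNReal.one_lt_top⟩
  have hνκ : ν = κ := Measure.ext_of_Iic ν κ fun a => by rw [hν_Iic, hκ_Iic]
  have hkey : ∀ (s : Set ℝ), MeasurableSet s → ∀ h : ℝ → ℝ,
      ∫ x in s, h x ∂ν = ∫ x in s, h x * f x := by
    intro s hs h
    rw [hνκ, hκ_def, setIntegral_withDensity_eq_setIntegral_smul hφmeas _ hs]
    refine integral_congr_ae ?_
    filter_upwards [ae_restrict_of_ae hfg, ae_restrict_of_ae hg_nonneg] with x hx1 hx2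
    rw [hφ_def, NNReal.smul_def, smul_eq_mul, Real.coe_toNNReal _ hx2, ← hx1, mul_comm]
  -- product measure
  have hjoint : μ.map (fun ω => (X ω, Y ω)) = ν.prod ν := by
    have h := (indepFun_iff_map_prod_eq_prod_map_map hXm.aemeasurable hYm.aemeasurable).mp hindep
    rw [h, hYmap]
  haveI : IsProbabilityMeasure (ν.prod ν) := by infer_instance
  -- null sets
  have hfst_null : ∀ (s : Set ℝ), ν s = 0 → (ν.prod ν) {p : ℝ × ℝ | p.1 ∈ s} = 0 := by
    intro s h0
    have h : {p : ℝ × ℝ | p.1 ∈ s} = s ×ˢ Set.univ := by ext p; simp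
    rw [h, Measure.prod_prod, h0, zero_mul]
  have hsnd_null : ∀ (s : Set ℝ), ν s = 0 → (ν.prod ν) {p : ℝ × ℝ | p.2 ∈ s} = 0 := by
    intro s h0
    have h : {p : ℝ × ℝ | p.2 ∈ s} = Set.univ ×ˢ s := by ext p; simp
    rw [h, Measure.prod_prod, h0, mul_zero]
  have hdiag : (ν.prod ν) {p : ℝ × ℝ | p.1 = p.2} = 0 := by
    have hm : MeasurableSet {p : ℝ × ℝ | p.1 = p.2} :=
      measurableSet_eq_fun measurable_fst measurable_snd
    rw [Measure.prod_apply hm]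
    have h : ∀ x : ℝ, ν (Prod.mk x ⁻¹' {p : ℝ × ℝ | p.1 = p.2}) = 0 := by
      intro x
      have h2 : (Prod.mk x ⁻¹' {p : ℝ × ℝ | p.1 = p.2}) = {x} := by
        ext z; simp [eq_comm]
      rw [h2, hν_atom]
    calc ∫⁻ x, ν (Prod.mk x ⁻¹' {p : ℝ × ℝ | p.1 = p.2}) ∂ν = ∫⁻ _, 0 ∂ν :=
          lintegral_congr fun x => h x
      _ = 0 := lintegral_zero
  have ae1 : ∀ᵐ p ∂(ν.prod ν), 0 ≤ p.1 := by
    rw [ae_iff]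
    have h : {p : ℝ × ℝ | ¬ 0 ≤ p.1} = {p : ℝ × ℝ | p.1 ∈ Set.Iio 0} := by
      ext p; simp [not_le]
    rw [h]
    exact hfst_null _ hν_Iio0
  have ae2 : ∀ᵐ p ∂(ν.prod ν), 0 ≤ p.2 := by
    rw [ae_iff]
    have h : {p : ℝ × ℝ | ¬ 0 ≤ p.2} = {p : ℝ × ℝ | p.2 ∈ Set.Iio 0} := by
      ext p; simp [not_le]
    rw [h]
    exact hsnd_null _ hν_Iio0
  have ae_fst_ne : ∀ a : ℝ, ∀ᵐ p ∂(ν.prod ν), p.1 ≠ a := by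
    intro a
    rw [ae_iff]
    have h : {p : ℝ × ℝ | ¬ p.1 ≠ a} = {p : ℝ × ℝ | p.1 ∈ ({a} : Set ℝ)} := by
      ext p; simp
    rw [h]
    exact hfst_null _ (hν_atom a)
  have ae_snd_ne : ∀ a : ℝ, ∀ᵐ p ∂(ν.prod ν), p.2 ≠ a := by
    intro a
    rw [ae_iff]
    have h : {p : ℝ × ℝ | ¬ p.2 ≠ a} = {p : ℝ × ℝ | p.2 ∈ ({a} : Set ℝ)} := by
      ext p; simp
    rw [h]
    exact hsnd_null _ (hν_atom a)
  have ae_ne : ∀ᵐ p ∂(ν.prod ν), p.1 ≠ p.2 := by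
    rw [ae_iff]
    have h : {p : ℝ × ℝ | ¬ p.1 ≠ p.2} = {p : ℝ × ℝ | p.1 = p.2} := by
      ext p; simp
    rw [h]
    exact hdiag
  -- integrability
  have hHHm : Measurable fun p : ℝ × ℝ => Real.log (1 + max p.1 p.2) :=
    Real.measurable_log.comp (measurable_const.add (measurable_fst.max measurable_snd))
  have hHHint : Integrable (fun p : ℝ × ℝ => Real.log (1 + max p.1 p.2)) (ν.prod ν) := by
    rw [← hjoint]
    rw [integrable_map_measure hHHm.aestronglyMeasurable (hXm.prodMk hYm).aemeasurable]
    exact hInt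
  have hD1int : Integrable (rbbtD1 τ₂) (ν.prod ν) := by
    refine hHHint.mono (rbbtD1_meas τ₂).aestronglyMeasurable
      (Filter.Eventually.of_forall fun p => ?_)
    by_cases h : τ₂ < p.1 ∧ p.2 ≤ p.1
    · rw [rbbtD1, if_pos h, max_eq_left h.2]
    · rw [rbbtD1, if_neg h]
      simp [norm_nonneg]
  have hD2int : Integrable (rbbtD2 τ₂) (ν.prod ν) := by
    refine hHHint.mono (rbbtD2_meas τ₂).aestronglyMeasurable
      (Filter.Eventually.of_forall fun p => ?_)
    by_cases h : τ₂ < p.2 ∧ p.1 ≤ p.2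
    · rw [rbbtD2, if_pos h, max_eq_right h.2]
    · rw [rbbtD2, if_neg h]
      simp [norm_nonneg]
  have hG2int : Integrable (rbbtG2 τ₁ τ₂) (ν.prod ν) := by
    refine (integrable_const (Real.log (1 + τ₂))).mono
      (rbbtG2_meas τ₁ τ₂).aestronglyMeasurable (Filter.Eventually.of_forall fun p => ?_)
    by_cases h : τ₁ < p.1 ∧ p.1 ≤ τ₂ ∧ p.2 ≤ τ₂
    · rw [rbbtG2, if_pos h]
      have h1 : 0 ≤ Real.log (1 + p.1) := Real.log_nonneg (by linarith [h.1])
      have h2 : Real.log (1 + p.1) ≤ Real.log (1 + τ₂) :=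
        Real.log_le_log (by linarith [h.1]) (by linarith [h.2.1])
      rw [Real.norm_eq_abs, abs_of_nonneg h1]
      exact le_trans h2 (le_abs_self _)
    · rw [rbbtG2, if_neg h]
      simp
  have hG3int : Integrable (rbbtG3 τ₁ τ₂ c) (ν.prod ν) := by
    refine (integrable_const (Real.log (1 + c))).mono
      (rbbtG3_meas τ₁ τ₂ c).aestronglyMeasurable (Filter.Eventually.of_forall fun p => ?_)
    by_cases h : p.1 ≤ τ₁ ∧ p.2 ≤ τ₂
    · rw [rbbtG3, if_pos h]
    · rw [rbbtG3, if_neg h]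
      simp
  -- transfer LHS
  have hGm : Measurable fun p : ℝ × ℝ =>
      Real.log (1 + max (max (if τ₁ ≤ p.1 then p.1 else 0) (if τ₂ ≤ p.2 then p.2 else 0)) c) := by
    refine Real.measurable_log.comp (measurable_const.add (Measurable.max (Measurable.max ?_ ?_)
      measurable_const))
    · exact Measurable.ite (measurableSet_le measurable_const measurable_fst)
        measurable_fst measurable_const
    · exact Measurable.ite (measurableSet_le measurable_const measurable_snd)
        measurable_snd measurable_const
  have hLHS : (∫ ω, Real.log (1 + max (max (if τ₁ ≤ X ω then X ω else 0)
        (if τ₂ ≤ Y ω then Y ω else 0)) c) ∂μ)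
      = ∫ p : ℝ × ℝ, Real.log (1 + max (max (if τ₁ ≤ p.1 then p.1 else 0)
          (if τ₂ ≤ p.2 then p.2 else 0)) c) ∂(ν.prod ν) := by
    rw [← hjoint, integral_map (hXm.prodMk hYm).aemeasurable hGm.aestronglyMeasurable]
  -- a.e. decomposition
  have hae : (fun p : ℝ × ℝ => Real.log (1 + max (max (if τ₁ ≤ p.1 then p.1 else 0)
        (if τ₂ ≤ p.2 then p.2 else 0)) c))
      =ᵐ[ν.prod ν] fun p => rbbtD1 τ₂ p + rbbtD2 τ₂ p + rbbtG2 τ₁ τ₂ p + rbbtG3 τ₁ τ₂ c p := by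
    filter_upwards [ae1, ae2, ae_fst_ne τ₁, ae_fst_ne τ₂, ae_snd_ne τ₂, ae_ne]
      with p h1 h2 h3 h4 h5 h6
    rw [rbbtD1, rbbtD2, rbbtG2, rbbtG3]
    exact rbbt_ptws hc0 hcτ₁ hτ₁₂ h1 h2 h3 h4 h5 h6
  -- compute the four integrals
  have hswap : ∫ p, rbbtD2 τ₂ p ∂(ν.prod ν) = ∫ p, rbbtD1 τ₂ p ∂(ν.prod ν) := by
    have h : ∀ p : ℝ × ℝ, rbbtD2 τ₂ p = rbbtD1 τ₂ p.swap := fun p => rfl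
    simp_rw [h]
    exact integral_prod_swap (rbbtD1 τ₂)
  have hD1val : ∫ p, rbbtD1 τ₂ p ∂(ν.prod ν)
      = ∫ x in Set.Ioi τ₂, (F x * Real.log (1 + x)) * f x := by
    rw [MeasureTheory.integral_prod _ hD1int]
    have hinner : ∀ x : ℝ, (∫ y, rbbtD1 τ₂ (x, y) ∂ν)
        = Set.indicator (Set.Ioi τ₂) (fun x => F x * Real.log (1 + x)) x := by
      intro x
      by_cases hx : τ₂ < x
      · have h : (fun y => rbbtD1 τ₂ (x, y))
            = Set.indicator (Set.Iic x) fun _ => Real.log (1 + x) := by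
          funext y
          rw [rbbtD1, Set.indicator_apply]
          by_cases hy : y ≤ x
          · rw [if_pos ⟨hx, hy⟩, if_pos (Set.mem_Iic.mpr hy)]
          · rw [if_neg fun hc => hy hc.2, if_neg fun hc => hy (Set.mem_Iic.mp hc)]
        rw [h, integral_indicator_const _ measurableSet_Iic,
          Set.indicator_of_mem (Set.mem_Ioi.mpr hx), measureReal_def, hνIic_toReal, smul_eq_mul]
      · have h : (fun y => rbbtD1 τ₂ (x, y)) = fun _ => (0 : ℝ) := by
          funext y
          rw [rbbtD1, if_neg fun hc => hx hc.1]
        rw [h, integral_zero, Set.indicator_of_notMem (fun hc => hx (Set.mem_Ioi.mp hc))]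
    simp_rw [hinner]
    rw [integral_indicator measurableSet_Ioi]
    exact hkey _ measurableSet_Ioi _
  have hG2val : ∫ p, rbbtG2 τ₁ τ₂ p ∂(ν.prod ν)
      = F τ₂ * ∫ x in τ₁..τ₂, Real.log (1 + x) * f x := by
    have h : rbbtG2 τ₁ τ₂ = Set.indicator (Set.Ioc τ₁ τ₂ ×ˢ Set.Iic τ₂)
        (fun p => Real.log (1 + p.1) * (fun _ : ℝ => (1 : ℝ)) p.2) := by
      funext p
      rw [rbbtG2, Set.indicator_apply]
      by_cases h : τ₁ < p.1 ∧ p.1 ≤ τ₂ ∧ p.2 ≤ τ₂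
      · rw [if_pos h, if_pos (Set.mem_prod.mpr ⟨Set.mem_Ioc.mpr ⟨h.1, h.2.1⟩,
          Set.mem_Iic.mpr h.2.2⟩), mul_one]
      · rw [if_neg h, if_neg]
        intro hc
        rcases Set.mem_prod.mp hc with ⟨hc1, hc2⟩
        exact h ⟨(Set.mem_Ioc.mp hc1).1, (Set.mem_Ioc.mp hc1).2, Set.mem_Iic.mp hc2⟩
    rw [h, integral_indicator (measurableSet_Ioc.prod measurableSet_Iic),
      setIntegral_prod_mul (fun x => Real.log (1 + x)) (fun _ : ℝ => (1 : ℝ)) _ _]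
    rw [setIntegral_const, measureReal_def, hνIic_toReal, smul_eq_mul, mul_one,
      hkey _ measurableSet_Ioc _, intervalIntegral.integral_of_le hτ₁₂]
    ring
  have hG3val : ∫ p, rbbtG3 τ₁ τ₂ c p ∂(ν.prod ν) = Real.log (1 + c) * F τ₁ * F τ₂ := by
    have h : rbbtG3 τ₁ τ₂ c = Set.indicator (Set.Iic τ₁ ×ˢ Set.Iic τ₂)
        (fun _ => Real.log (1 + c)) := by
      funext p
      rw [rbbtG3, Set.indicator_apply]
      by_cases h : p.1 ≤ τ₁ ∧ p.2 ≤ τ₂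
      · rw [if_pos h, if_pos (Set.mem_prod.mpr ⟨Set.mem_Iic.mpr h.1, Set.mem_Iic.mpr h.2⟩)]
      · rw [if_neg h, if_neg]
        intro hc
        rcases Set.mem_prod.mp hc with ⟨hc1, hc2⟩
        exact h ⟨Set.mem_Iic.mp hc1, Set.mem_Iic.mp hc2⟩
    rw [h, integral_indicator_const _ (measurableSet_Iic.prod measurableSet_Iic),
      measureReal_def, Measure.prod_prod, ENNReal.toReal_mul, hνIic_toReal, hνIic_toReal, smul_eq_mul]
    ring
  -- first RHS term
  have hT1 : (∫ x in Set.Ioi τ₂, Real.log (1 + x) * (2 * F x * f x))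
      = (∫ x in Set.Ioi τ₂, (F x * Real.log (1 + x)) * f x)
        + ∫ x in Set.Ioi τ₂, (F x * Real.log (1 + x)) * f x := by
    have h : (fun x => Real.log (1 + x) * (2 * F x * f x))
        = fun x => (2 : ℝ) • ((F x * Real.log (1 + x)) * f x) := by
      funext x
      simp only [smul_eq_mul]
      ring
    rw [h, integral_smul]
    simp only [smul_eq_mul]
    ring
  -- assemble
  have h12 : Integrable (fun p : ℝ × ℝ => rbbtD1 τ₂ p + rbbtD2 τ₂ p) (ν.prod ν) :=
    hD1int.add hD2int
  have h123 : Integrable (fun p : ℝ × ℝ => rbbtD1 τ₂ p + rbbtD2 τ₂ p + rbbtG2 τ₁ τ₂ p)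
      (ν.prod ν) := h12.add hG2int
  rw [hLHS, integral_congr_ae hae,
    integral_add h123 hG3int,
    integral_add h12 hG2int,
    integral_add hD1int hD2int,
    hswap, hD1val, hG2val, hG3val, hT1]
end

section
/- Let X and Y be independent nonnegative real random variables with common cumulative distribution function F, where F is continuous, F(0) = 0, and F has a density f with support [0,∞). Let 0 ≤ τ₁ ≤ c ≤ τ₂. Then E[ log(1 + max( X·1{X ≥ τ₁}, Y·1{Y ≥ τ₂}, c )) ] = ∫_{τ₂}^{∞} log(1+x)·2F(x)f(x) dx + F(τ₂)·∫_{c}^{τ₂} log(1+x)·f(x) dx + log(1+c)·F(τ₂)·F(c). -/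
/-!
STATEMENT 3 (Lemma 4 of the paper): if `0 ≤ τ₁ ≤ c ≤ τ₂`, then
`E[log(1 + max(X·1{X ≥ τ₁}, Y·1{Y ≥ τ₂}, c))]
  = ∫_{τ₂}^{∞} log(1+x)·2F(x)f(x) dx + F(τ₂)·∫_{c}^{τ₂} log(1+x)·f(x) dx
    + log(1+c)·F(τ₂)·F(c)`.
-/

open MeasureTheory ProbabilityTheory
open scoped ENNReal NNReal

theorem rate_between_thresholds
    {Ω : Type*} [MeasurableSpace Ω] (μ : Measure Ω) [IsProbabilityMeasure μ]
    (X Y : Ω → ℝ) (hXm : Measurable X) (hYm : Measurable Y)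
    (hX0 : ∀ ω, 0 ≤ X ω) (hY0 : ∀ ω, 0 ≤ Y ω)
    (hindep : IndepFun X Y μ)
    (F f : ℝ → ℝ)
    (hFX : ∀ x, F x = (μ {ω | X ω ≤ x}).toReal)
    (hFY : ∀ x, F x = (μ {ω | Y ω ≤ x}).toReal)
    (hFcont : Continuous F) (hF0 : F 0 = 0)
    (hFdens : ∀ x, F x = ∫ t in Set.Iic x, f t)
    (hfpos : ∀ x, 0 ≤ x → 0 < f x) (hfneg : ∀ x, x < 0 → f x = 0)
    (hInt : Integrable (fun ω => Real.log (1 + max (X ω) (Y ω))) μ)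
    (τ₁ τ₂ c : ℝ) (hτ₁0 : 0 ≤ τ₁) (hτ₁c : τ₁ ≤ c) (hcτ₂ : c ≤ τ₂) :
    ∫ ω, Real.log (1 + max (max (if τ₁ ≤ X ω then X ω else 0)
        (if τ₂ ≤ Y ω then Y ω else 0)) c) ∂μ
      = (∫ x in Set.Ioi τ₂, Real.log (1 + x) * (2 * F x * f x))
        + F τ₂ * (∫ x in c..τ₂, Real.log (1 + x) * f x)
        + Real.log (1 + c) * F τ₂ * F c := by
  have hc0 : (0:ℝ) ≤ c := le_trans hτ₁0 hτ₁c
  have hτ₂0 : (0:ℝ) ≤ τ₂ := le_trans hc0 hcτ₂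
  have hf0 : ∀ x, 0 ≤ f x := by
    intro x
    rcases lt_or_ge x 0 with h | h
    · rw [hfneg x h]
    · exact (hfpos x h).le
  have hF0' : ∀ x, 0 ≤ F x := fun x => by rw [hFX]; exact ENNReal.toReal_nonneg
  have hF1 : ∀ x, F x ≤ 1 := by
    intro x
    rw [hFX]
    have h1 : μ {ω | X ω ≤ x} ≤ 1 := prob_le_one
    calc (μ {ω | X ω ≤ x}).toReal ≤ (1 : ℝ≥0∞).toReal :=
          ENNReal.toReal_mono (by norm_num) h1
      _ = 1 := by simp
  -- f is integrable on every Iic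
  have hfint : ∀ a : ℝ, IntegrableOn f (Set.Iic a) := by
    intro a
    by_contra hna
    have hzero : ∀ b : ℝ, a ≤ b → μ {ω | X ω ≤ b} = 0 := by
      intro b hab
      have hnb : ¬ IntegrableOn f (Set.Iic b) := fun h =>
        hna (h.mono_set (Set.Iic_subset_Iic.mpr hab))
      have hFb : F b = 0 := by rw [hFdens b, integral_undef hnb]
      have h2 := hFX b
      rw [hFb] at h2
      rcases (ENNReal.toReal_eq_zero_iff _).mp h2.symm with h3 | h3
      · exact h3
      · exact absurd h3 (measure_ne_top μ _)
    have huniv : (⋃ n : ℕ, {ω | X ω ≤ a + n}) = Set.univ := by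
      ext ω
      simp only [Set.mem_iUnion, Set.mem_setOf_eq, Set.mem_univ, iff_true]
      exact ⟨⌈X ω - a⌉₊, by linarith [Nat.le_ceil (X ω - a)]⟩
    have h0 : μ Set.univ = 0 := by
      rw [← huniv]
      exact measure_iUnion_null fun n =>
        hzero _ (le_add_of_nonneg_right (Nat.cast_nonneg n))
    simp at h0
  -- f is a.e. measurable
  have hfm : AEMeasurable f (volume : Measure ℝ) := by
    have hu : (⋃ n : ℕ, Set.Iic (n:ℝ)) = Set.univ := by
      ext x; simp only [Set.mem_iUnion, Set.mem_Iic, Set.mem_univ, iff_true]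
      exact ⟨⌈x⌉₊, Nat.le_ceil x⟩
    have : AEStronglyMeasurable f (volume.restrict (⋃ n : ℕ, Set.Iic (n:ℝ))) := by
      rw [aestronglyMeasurable_iUnion_iff]
      exact fun n => (hfint n).aestronglyMeasurable
    rw [hu, Measure.restrict_univ] at this
    exact this.aemeasurable
  set d : ℝ → ℝ≥0 := fun x => (f x).toNNReal with hd
  have hdm : AEMeasurable d (volume : Measure ℝ) := hfm.real_toNNReal
  set W : Measure ℝ := volume.withDensity (fun x => (d x : ℝ≥0∞)) with hW
  have hWIic : ∀ a : ℝ, W (Set.Iic a) = ENNReal.ofReal (F a) := by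
    intro a
    rw [hW, withDensity_apply _ measurableSet_Iic, hFdens a,
      ofReal_integral_eq_lintegral_ofReal (hfint a)
        ((ae_restrict_iff' measurableSet_Iic).mpr (Filter.Eventually.of_forall fun x _ => hf0 x))]
    rfl
  have hdtot : ∫⁻ x, (d x : ℝ≥0∞) ∂volume ≤ 1 := by
    have hgm : ∀ n : ℕ, AEMeasurable
        (fun x => (Set.Iic (n:ℝ)).indicator (fun x => (d x : ℝ≥0∞)) x) (volume : Measure ℝ) :=
      fun n => (hdm.coe_nnreal_ennreal).indicator measurableSet_Iic
    have hmono : ∀ x : ℝ, Monotone fun n : ℕ =>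
        (Set.Iic (n:ℝ)).indicator (fun x => (d x : ℝ≥0∞)) x := by
      intro x m n hmn
      exact Set.indicator_le_indicator_of_subset
        (Set.Iic_subset_Iic.mpr (Nat.cast_le.mpr hmn)) (fun a => zero_le) x
    have hsup : ∀ x : ℝ, (⨆ n : ℕ, (Set.Iic (n:ℝ)).indicator (fun x => (d x : ℝ≥0∞)) x)
        = (d x : ℝ≥0∞) := by
      intro x
      refine le_antisymm (iSup_le fun n => Set.indicator_le_self _ _ x) ?_
      refine le_iSup_of_le ⌈x⌉₊ ?_
      rw [Set.indicator_of_mem (show x ∈ Set.Iic ((⌈x⌉₊ : ℕ) : ℝ) from Nat.le_ceil x)]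
    calc ∫⁻ x, (d x : ℝ≥0∞) ∂volume
        = ∫⁻ x, ⨆ n : ℕ, (Set.Iic (n:ℝ)).indicator (fun x => (d x : ℝ≥0∞)) x ∂volume :=
          lintegral_congr fun x => (hsup x).symm
      _ = ⨆ n : ℕ, ∫⁻ x, (Set.Iic (n:ℝ)).indicator (fun x => (d x : ℝ≥0∞)) x ∂volume :=
          lintegral_iSup' hgm (Filter.Eventually.of_forall hmono)
      _ ≤ 1 := by
          refine iSup_le fun n => ?_
          rw [lintegral_indicator measurableSet_Iic]
          have h := hWIic (n:ℝ)
          rw [hW, withDensity_apply _ measurableSet_Iic] at h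
          rw [h]
          exact ENNReal.ofReal_le_one.mpr (hF1 _)
  have hWfin : IsFiniteMeasure W := by
    rw [hW]
    exact isFiniteMeasure_withDensity (ne_top_of_le_ne_top ENNReal.one_ne_top hdtot)
  haveI := hWfin
  have hWX : μ.map X = W := by
    haveI : IsProbabilityMeasure (μ.map X) := Measure.isProbabilityMeasure_map hXm.aemeasurable
    refine Measure.ext_of_Iic (μ.map X) W fun a => ?_
    rw [Measure.map_apply hXm measurableSet_Iic, hWIic a]
    have hset : X ⁻¹' Set.Iic a = {ω | X ω ≤ a} := rfl
    rw [hset, ← ENNReal.ofReal_toReal (measure_ne_top μ _), ← hFX a]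
  have hWY : μ.map Y = W := by
    haveI : IsProbabilityMeasure (μ.map Y) := Measure.isProbabilityMeasure_map hYm.aemeasurable
    refine Measure.ext_of_Iic (μ.map Y) W fun a => ?_
    rw [Measure.map_apply hYm measurableSet_Iic, hWIic a]
    have hset : Y ⁻¹' Set.Iic a = {ω | Y ω ≤ a} := rfl
    rw [hset, ← ENNReal.ofReal_toReal (measure_ne_top μ _), ← hFY a]
  have hWprob : IsProbabilityMeasure W := hWX ▸ Measure.isProbabilityMeasure_map hXm.aemeasurable
  -- transfer of integrals and integrability through the density
  have hWint : ∀ (g : ℝ → ℝ), ∫ x, g x ∂W = ∫ x, f x * g x := by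
    intro g
    rw [hW, integral_withDensity_eq_integral_smul₀ hdm g]
    congr 1
    ext x
    simp [hd, NNReal.smul_def, Real.coe_toNNReal _ (hf0 x)]
  have hWsetint : ∀ (g : ℝ → ℝ) (s : Set ℝ), MeasurableSet s →
      ∫ x in s, g x ∂W = ∫ x in s, f x * g x := by
    intro g s hs
    rw [hW, restrict_withDensity hs, integral_withDensity_eq_integral_smul₀ hdm.restrict g]
    congr 1
    ext x
    simp [hd, NNReal.smul_def, Real.coe_toNNReal _ (hf0 x)]
  have hWintegrable : ∀ (g : ℝ → ℝ), Integrable g W ↔ Integrable (fun x => f x * g x) := by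
    intro g
    rw [hW, integrable_withDensity_iff_integrable_smul₀ hdm]
    refine integrable_congr (Filter.Eventually.of_forall fun x => ?_)
    simp [hd, NNReal.smul_def, Real.coe_toNNReal _ (hf0 x)]
  have hWac : ∀ s : Set ℝ, volume s = 0 → W s = 0 := by
    intro s hs
    exact withDensity_absolutelyContinuous volume _ hs
  -- basic probability facts written with W
  have hWIic' : ∀ a : ℝ, (W (Set.Iic a)).toReal = F a := by
    intro a; rw [hWIic a, ENNReal.toReal_ofReal (hF0' a)]
  have hWIio : ∀ a : ℝ, (W (Set.Iio a)).toReal = F a := by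
    intro a
    have h1 : W (Set.Iic a) = W (Set.Iio a) := by
      have : W {a} = 0 := hWac _ (measure_singleton a)
      rw [← Set.Iio_union_right, measure_union (by simp) (measurableSet_singleton a), this,
        add_zero]
    rw [← hWIic' a, h1]
  -- log(1+x) is integrable wrt W
  have hlogX : Integrable (fun ω => Real.log (1 + X ω)) μ := by
    refine hInt.mono'
      ((Real.measurable_log.comp (measurable_const.add hXm)).aestronglyMeasurable)
      (Filter.Eventually.of_forall fun ω => ?_)
    have h1 : (0:ℝ) ≤ Real.log (1 + X ω) := Real.log_nonneg (by linarith [hX0 ω])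
    have h2 : Real.log (1 + X ω) ≤ Real.log (1 + max (X ω) (Y ω)) :=
      Real.log_le_log (by linarith [hX0 ω]) (by linarith [le_max_left (X ω) (Y ω)])
    rw [Real.norm_eq_abs, abs_of_nonneg h1]
    exact h2
  have hlogW : Integrable (fun x => Real.log (1 + x)) W := by
    have h := (integrable_map_measure
      ((Real.measurable_log.comp (measurable_const.add measurable_id)).aestronglyMeasurable)
      hXm.aemeasurable (μ := μ)).mpr hlogX
    rw [hWX] at h
    exact h
  have hlogf : Integrable (fun x => Real.log (1 + x) * f x) := by
    have h := (hWintegrable (fun x => Real.log (1 + x))).mp hlogW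
    exact h.congr (Filter.Eventually.of_forall fun x => mul_comm _ _)
  have hfintR : Integrable f := by
    refine ⟨hfm.aestronglyMeasurable, ?_⟩
    rw [hasFiniteIntegral_iff_ofReal (Filter.Eventually.of_forall hf0)]
    exact lt_of_le_of_lt hdtot ENNReal.one_lt_top
  -- a.e. nonnegativity wrt W
  have hWpos : ∀ᵐ x ∂W, 0 ≤ x := by
    rw [ae_iff]
    have hset : {x : ℝ | ¬ 0 ≤ x} = Set.Iio 0 := by ext x; simp [not_le]
    rw [hset, hW, withDensity_apply _ measurableSet_Iio,
      setLIntegral_congr_fun measurableSet_Iio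
        (fun x (hx : x ∈ Set.Iio 0) => by
          simp [hd, hfneg x hx] : Set.EqOn (fun x => (d x : ℝ≥0∞)) (fun _ => (0:ℝ≥0∞)) (Set.Iio 0)),
      lintegral_zero]
  -- the key pointwise identity
  set ψ : ℝ × ℝ → ℝ := fun p =>
    if τ₂ ≤ p.2 then Real.log (1 + max p.1 p.2) else Real.log (1 + max p.1 c) with hψ
  have hψm : Measurable ψ := by
    have h2 : MeasurableSet {p : ℝ × ℝ | τ₂ ≤ p.2} := measurable_snd measurableSet_Ici
    exact Measurable.ite h2
      (Real.measurable_log.comp ((measurable_const.add (measurable_fst.max measurable_snd))))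
      (Real.measurable_log.comp ((measurable_const.add (measurable_fst.max measurable_const))))
  have hpt : ∀ ω, Real.log (1 + max (max (if τ₁ ≤ X ω then X ω else 0)
      (if τ₂ ≤ Y ω then Y ω else 0)) c) = ψ (X ω, Y ω) := by
    intro ω
    simp only [hψ]
    by_cases hy : τ₂ ≤ Y ω
    · simp only [hy, if_true]
      by_cases hx : τ₁ ≤ X ω
      · simp only [hx, if_true]
        rw [max_eq_left (le_trans (hcτ₂.trans hy) (le_max_right (X ω) (Y ω)))]
      · simp only [hx, if_false]
        have h1 : max (0:ℝ) (Y ω) = Y ω := max_eq_right (hY0 ω)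
        have h2 : max (Y ω) c = Y ω := max_eq_left (hcτ₂.trans hy)
        have h3 : max (X ω) (Y ω) = Y ω :=
          max_eq_right (le_trans (le_of_not_ge hx) (hτ₁c.trans (hcτ₂.trans hy)))
        rw [h1, h2, h3]
    · simp only [hy, if_false]
      by_cases hx : τ₁ ≤ X ω
      · simp only [hx, if_true]
        rw [max_eq_left (hX0 ω)]
      · simp only [hx, if_false]
        have h1 : max (max (0:ℝ) 0) c = c := by rw [max_self, max_eq_right hc0]
        have h2 : max (X ω) c = c := max_eq_right ((le_of_not_ge hx).trans hτ₁c)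
        rw [h1, h2]
  have hψbd : ∀ x y : ℝ, 0 ≤ x → 0 ≤ y →
      ‖ψ (x, y)‖ ≤ Real.log (1 + max x y) + Real.log (1 + c) := by
    intro x y hx hy
    have hm : (0:ℝ) ≤ max x y := le_trans hx (le_max_left x y)
    have hlogc : (0:ℝ) ≤ Real.log (1 + c) := Real.log_nonneg (by linarith)
    have hlogm : (0:ℝ) ≤ Real.log (1 + max x y) := Real.log_nonneg (by linarith)
    have hψnn : 0 ≤ ψ (x, y) := by
      simp only [hψ]
      split
      · exact hlogm
      · refine Real.log_nonneg ?_
        have : (0:ℝ) ≤ max x c := le_trans hx (le_max_left x c)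
        linarith
    rw [Real.norm_eq_abs, abs_of_nonneg hψnn]
    simp only [hψ]
    split
    · linarith
    · have h2 : 1 + max x c ≤ (1 + max x y) * (1 + c) := by
        have hxy := le_max_left x y
        have hprod : (0:ℝ) ≤ max x y * c := mul_nonneg hm hc0
        rcases max_cases x c with ⟨h, _⟩ | ⟨h, _⟩ <;> rw [h] <;> nlinarith
      calc Real.log (1 + max x c) ≤ Real.log ((1 + max x y) * (1 + c)) :=
            Real.log_le_log (by nlinarith [le_max_right x c]) h2
        _ = Real.log (1 + max x y) + Real.log (1 + c) :=
            Real.log_mul (by positivity) (by positivity)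
  have hψint0 : Integrable (fun ω => ψ (X ω, Y ω)) μ := by
    refine Integrable.mono' (hInt.add (integrable_const (Real.log (1 + c))))
      ((hψm.comp (hXm.prodMk hYm)).aestronglyMeasurable) ?_
    exact Filter.Eventually.of_forall fun ω => hψbd _ _ (hX0 ω) (hY0 ω)
  have hpair : AEMeasurable (fun ω => (X ω, Y ω)) μ := (hXm.prodMk hYm).aemeasurable
  have hjoint : μ.map (fun ω => (X ω, Y ω)) = W.prod W := by
    rw [(indepFun_iff_map_prod_eq_prod_map_map hXm.aemeasurable hYm.aemeasurable).mp hindep,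
      hWX, hWY]
  have hψintW : Integrable ψ (W.prod W) := by
    rw [← hjoint]
    exact (integrable_map_measure (hjoint ▸ hψm.aestronglyMeasurable) hpair).mpr hψint0
  -- reduce the LHS to an integral over the product measure
  have hLHS : ∫ ω, Real.log (1 + max (max (if τ₁ ≤ X ω then X ω else 0)
      (if τ₂ ≤ Y ω then Y ω else 0)) c) ∂μ = ∫ p, ψ p ∂(W.prod W) := by
    rw [integral_congr_ae (Filter.Eventually.of_forall hpt), ← hjoint,
      integral_map hpair (hjoint ▸ hψm.aestronglyMeasurable)]
  -- swap the two coordinates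
  have hswap : ∫ p, ψ p ∂(W.prod W) = ∫ p : ℝ × ℝ, ψ (p.2, p.1) ∂(W.prod W) := by
    have h1 : ((W.prod W).map Prod.swap) = W.prod W := Measure.prod_swap
    conv_lhs => rw [← h1]
    rw [integral_map measurable_swap.aemeasurable (h1 ▸ hψm.aestronglyMeasurable)]
    rfl
  -- inner integral, fixed second coordinate
  set J : ℝ → ℝ := fun t => ∫ x in Set.Ioi t, Real.log (1 + x) * f x with hJ
  have hGmax : ∀ t : ℝ, 0 ≤ t →
      ∫ x, Real.log (1 + max x t) ∂W = Real.log (1 + t) * F t + J t := by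
    intro t ht
    have hint : Integrable (fun x => Real.log (1 + max x t)) W := by
      refine (hlogW.add (integrable_const (Real.log (1 + t)))).mono'
        ((Real.measurable_log.comp
          (measurable_const.add (measurable_id.max measurable_const))).aestronglyMeasurable) ?_
      filter_upwards [hWpos] with x hx
      have hmt : (0:ℝ) ≤ max x t := le_trans hx (le_max_left x t)
      rw [Real.norm_eq_abs, abs_of_nonneg (Real.log_nonneg (by linarith))]
      have hlt : (0:ℝ) ≤ Real.log (1 + t) := Real.log_nonneg (by linarith)
      have hlx : (0:ℝ) ≤ Real.log (1 + x) := Real.log_nonneg (by linarith)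
      rcases max_cases x t with ⟨h, _⟩ | ⟨h, _⟩ <;> rw [h] <;> simp only [Pi.add_apply] <;> linarith
    have hsplit := integral_add_compl (s := Set.Iic t) measurableSet_Iic hint
    rw [Set.compl_Iic] at hsplit
    rw [← hsplit]
    congr 1
    · rw [setIntegral_congr_fun measurableSet_Iic
        (fun x (hx : x ∈ Set.Iic t) => by rw [max_eq_right hx]),
        setIntegral_const, measureReal_def, hWIic' t, smul_eq_mul, mul_comm]
    · rw [setIntegral_congr_fun measurableSet_Ioi
        (fun x (hx : x ∈ Set.Ioi t) => by rw [max_eq_left (le_of_lt hx)]),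
        hWsetint _ _ measurableSet_Ioi, hJ]
      exact setIntegral_congr_fun measurableSet_Ioi fun x _ => mul_comm _ _
  have hinner : ∀ y : ℝ, ∫ x, ψ (x, y) ∂W =
      if τ₂ ≤ y then Real.log (1 + y) * F y + J y
      else Real.log (1 + c) * F c + J c := by
    intro y
    by_cases hy : τ₂ ≤ y
    · simp only [hψ, hy, if_true]
      exact hGmax y (le_trans hτ₂0 hy)
    · simp only [hψ, hy, if_false]
      exact hGmax c hc0
  -- outer integrability and iterated integral
  have hψintW' : Integrable (fun p : ℝ × ℝ => ψ (p.2, p.1)) (W.prod W) := hψintW.swap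
  have hiter : ∫ p : ℝ × ℝ, ψ (p.2, p.1) ∂(W.prod W) = ∫ y, ∫ x, ψ (x, y) ∂W ∂W :=
    integral_prod _ hψintW'
  have hhm' : Integrable (fun y => ∫ x, ψ (x, y) ∂W) W := hψintW'.integral_prod_left
  have hfun : (fun y => ∫ x, ψ (x, y) ∂W) = (fun y =>
      if τ₂ ≤ y then Real.log (1 + y) * F y + J y
      else Real.log (1 + c) * F c + J c) := funext hinner
  have hhint : Integrable (fun y =>
      if τ₂ ≤ y then Real.log (1 + y) * F y + J y
      else Real.log (1 + c) * F c + J c) W := hfun ▸ hhm'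
  have hsplit2 := integral_add_compl (s := Set.Ici τ₂) measurableSet_Ici hhint
  rw [Set.compl_Ici] at hsplit2
  have hIio : ∫ y in Set.Iio τ₂, (if τ₂ ≤ y then Real.log (1 + y) * F y + J y
      else Real.log (1 + c) * F c + J c) ∂W = (Real.log (1 + c) * F c + J c) * F τ₂ := by
    rw [setIntegral_congr_fun measurableSet_Iio (fun y (hy : y ∈ Set.Iio τ₂) =>
        if_neg (not_le.mpr hy)), setIntegral_const, measureReal_def, hWIio τ₂, smul_eq_mul, mul_comm]
  have hmL : Measurable fun y : ℝ => Real.log (1 + y) :=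
    Real.measurable_log.comp (measurable_const.add measurable_id)
  have hIciInt : IntegrableOn (fun y => f y * (Real.log (1 + y) * F y + J y)) (Set.Ici τ₂) := by
    have h0 : IntegrableOn (fun y =>
        if τ₂ ≤ y then Real.log (1 + y) * F y + J y
        else Real.log (1 + c) * F c + J c) (Set.Ici τ₂) W := hhint.integrableOn
    rw [IntegrableOn, hW, restrict_withDensity measurableSet_Ici,
      integrable_withDensity_iff_integrable_smul₀ hdm.restrict] at h0
    refine h0.congr ?_
    filter_upwards [ae_restrict_mem measurableSet_Ici] with y hy
    simp only [NNReal.smul_def, hd, Real.coe_toNNReal _ (hf0 y)]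
    rw [smul_eq_mul, if_pos (show τ₂ ≤ y from hy)]
  have hA : IntegrableOn (fun y => f y * (Real.log (1 + y) * F y)) (Set.Ioi τ₂) := by
    refine Integrable.mono' hlogf.abs.integrableOn
      ((hfm.aestronglyMeasurable.mul ((hmL.aestronglyMeasurable).mul
        hFcont.aestronglyMeasurable)).restrict) (Filter.Eventually.of_forall fun y => ?_)
    rw [Real.norm_eq_abs, show f y * (Real.log (1 + y) * F y)
      = (Real.log (1 + y) * f y) * F y by ring, abs_mul]
    exact mul_le_of_le_one_right (abs_nonneg _) (abs_le.mpr ⟨by linarith [hF0' y], hF1 y⟩)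
  have hB2 : IntegrableOn (fun y => (F y - F τ₂) * (Real.log (1 + y) * f y)) (Set.Ioi τ₂) := by
    have t1 : IntegrableOn (fun y => F y * (Real.log (1 + y) * f y)) (Set.Ioi τ₂) :=
      hA.congr (Filter.Eventually.of_forall fun y => by ring)
    have t2 : IntegrableOn (fun y => F τ₂ * (Real.log (1 + y) * f y)) (Set.Ioi τ₂) :=
      hlogf.integrableOn.const_mul (F τ₂)
    exact (t1.sub t2).congr (Filter.Eventually.of_forall fun y => by
      simp only [Pi.sub_apply]; ring)
  have hB : IntegrableOn (fun y => f y * J y) (Set.Ioi τ₂) := by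
    have h1 := hIciInt.mono_set Set.Ioi_subset_Ici_self
    exact (h1.sub hA).congr (Filter.Eventually.of_forall fun y => by
      simp only [Pi.sub_apply]; ring)
  -- Fubini step
  set K : ℝ × ℝ → ℝ := fun p => Set.indicator {q : ℝ × ℝ | τ₂ < q.1 ∧ q.1 < q.2}
    (fun q => f q.1 * (Real.log (1 + q.2) * f q.2)) p with hK
  have hKsetm : MeasurableSet {q : ℝ × ℝ | τ₂ < q.1 ∧ q.1 < q.2} :=
    (measurableSet_lt measurable_const measurable_fst).inter
      (measurableSet_lt measurable_fst measurable_snd)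
  have hKm : AEStronglyMeasurable K ((volume : Measure ℝ).prod (volume : Measure ℝ)) := by
    rw [hK]
    refine AEStronglyMeasurable.indicator ?_ hKsetm
    exact (hfm.comp_fst.mul (((hmL.comp measurable_snd).aemeasurable).mul
      hfm.comp_snd)).aestronglyMeasurable
  have hKint : Integrable K ((volume : Measure ℝ).prod (volume : Measure ℝ)) := by
    refine Integrable.mono' (hfintR.mul_prod hlogf.abs) hKm
      (Filter.Eventually.of_forall fun p => ?_)
    by_cases hp : τ₂ < p.1 ∧ p.1 < p.2
    · simp only [hK, Set.indicator_of_mem (show p ∈ {q : ℝ × ℝ | τ₂ < q.1 ∧ q.1 < q.2} from hp)]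
      rw [Real.norm_eq_abs, abs_mul, abs_of_nonneg (hf0 _)]
    · simp only [hK,
        Set.indicator_of_notMem (show p ∉ {q : ℝ × ℝ | τ₂ < q.1 ∧ q.1 < q.2} from hp)]
      rw [norm_zero]
      exact mul_nonneg (hf0 _) (abs_nonneg _)
  have hyeq : ∀ y : ℝ, (∫ x, K (y, x)) = Set.indicator (Set.Ioi τ₂)
      (fun y => f y * J y) y := by
    intro y
    by_cases hy : τ₂ < y
    · have hfn : (fun x => K (y, x)) = fun x => Set.indicator (Set.Ioi y)
          (fun x => f y * (Real.log (1 + x) * f x)) x := by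
        funext x
        simp only [hK, Set.indicator_apply, Set.mem_setOf_eq, Set.mem_Ioi, hy, true_and]
      rw [hfn, integral_indicator measurableSet_Ioi,
        Set.indicator_of_mem (show y ∈ Set.Ioi τ₂ from hy), integral_const_mul]
    · have hfn : (fun x => K (y, x)) = fun _ => (0 : ℝ) := by
        funext x
        simp only [hK, Set.indicator_apply, Set.mem_setOf_eq, hy, false_and, if_false]
      rw [Set.indicator_of_notMem (show y ∉ Set.Ioi τ₂ from hy), hfn, integral_zero]
  have hxeq : ∀ x : ℝ, (∫ y, K (y, x)) = Set.indicator (Set.Ioi τ₂)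
      (fun x => (F x - F τ₂) * (Real.log (1 + x) * f x)) x := by
    intro x
    have hfn : (fun y => K (y, x)) = fun y =>
        Set.indicator (Set.Ioo τ₂ x) f y * (Real.log (1 + x) * f x) := by
      funext y
      by_cases hy : τ₂ < y ∧ y < x
      · simp only [hK, Set.indicator_of_mem
          (show ((y, x) : ℝ × ℝ) ∈ {q : ℝ × ℝ | τ₂ < q.1 ∧ q.1 < q.2} from hy),
          Set.indicator_of_mem (show y ∈ Set.Ioo τ₂ x from ⟨hy.1, hy.2⟩)]
      · simp only [hK, Set.indicator_of_notMem
          (show ((y, x) : ℝ × ℝ) ∉ {q : ℝ × ℝ | τ₂ < q.1 ∧ q.1 < q.2} from hy),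
          Set.indicator_of_notMem
            (show y ∉ Set.Ioo τ₂ x from fun hmem => hy ⟨hmem.1, hmem.2⟩), zero_mul]
    rw [hfn, integral_mul_const, integral_indicator measurableSet_Ioo]
    by_cases hx : τ₂ < x
    · rw [Set.indicator_of_mem (show x ∈ Set.Ioi τ₂ from hx)]
      congr 1
      have h1 : ∫ y in Set.Ioo τ₂ x, f y = ∫ y in Set.Ioc τ₂ x, f y :=
        setIntegral_congr_set Ioo_ae_eq_Ioc
      have hu : Set.Iic τ₂ ∪ Set.Ioc τ₂ x = Set.Iic x := Set.Iic_union_Ioc_eq_Iic hx.le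
      have h2 := setIntegral_union (f := f) (Set.Iic_disjoint_Ioc le_rfl) measurableSet_Ioc
        ((hfint x).mono_set (Set.Iic_subset_Iic.mpr hx.le))
        ((hfint x).mono_set Set.Ioc_subset_Iic_self)
      rw [hu] at h2
      rw [h1, hFdens x, hFdens τ₂, h2]
      ring
    · rw [Set.indicator_of_notMem (show x ∉ Set.Ioi τ₂ from hx), Set.Ioo_eq_empty hx]
      simp
  have hswap2 : (∫ y, ∫ x, K (y, x)) = ∫ x, ∫ y, K (y, x) :=
    integral_integral_swap hKint
  have hFub : ∫ y in Set.Ioi τ₂, f y * J y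
      = ∫ x in Set.Ioi τ₂, (F x - F τ₂) * (Real.log (1 + x) * f x) := by
    calc ∫ y in Set.Ioi τ₂, f y * J y
        = ∫ y, Set.indicator (Set.Ioi τ₂) (fun y => f y * J y) y :=
          (integral_indicator measurableSet_Ioi).symm
      _ = ∫ y, ∫ x, K (y, x) :=
          integral_congr_ae (Filter.Eventually.of_forall fun y => (hyeq y).symm)
      _ = ∫ x, ∫ y, K (y, x) := hswap2
      _ = ∫ x, Set.indicator (Set.Ioi τ₂)
            (fun x => (F x - F τ₂) * (Real.log (1 + x) * f x)) x :=
          integral_congr_ae (Filter.Eventually.of_forall hxeq)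
      _ = ∫ x in Set.Ioi τ₂, (F x - F τ₂) * (Real.log (1 + x) * f x) :=
          integral_indicator measurableSet_Ioi
  -- combine the Ioi τ₂ pieces
  have hC : IntegrableOn (fun y => Real.log (1 + y) * (2 * F y * f y)) (Set.Ioi τ₂) := by
    have := (hA.add hB2).add (hlogf.integrableOn.const_mul (F τ₂))
    exact this.congr (Filter.Eventually.of_forall fun y => by
      simp only [Pi.add_apply]; ring)
  have hcomb : ∫ y in Set.Ioi τ₂, f y * (Real.log (1 + y) * F y + J y)
      = (∫ x in Set.Ioi τ₂, Real.log (1 + x) * (2 * F x * f x))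
        - F τ₂ * ∫ x in Set.Ioi τ₂, Real.log (1 + x) * f x := by
    have e1 : ∫ y in Set.Ioi τ₂, f y * (Real.log (1 + y) * F y + J y)
        = (∫ y in Set.Ioi τ₂, f y * (Real.log (1 + y) * F y))
          + ∫ y in Set.Ioi τ₂, f y * J y := by
      rw [← integral_add hA hB]
      exact setIntegral_congr_fun measurableSet_Ioi fun y _ => by ring
    have e2 : (∫ y in Set.Ioi τ₂, f y * (Real.log (1 + y) * F y))
        + ∫ x in Set.Ioi τ₂, (F x - F τ₂) * (Real.log (1 + x) * f x)
        = (∫ x in Set.Ioi τ₂, Real.log (1 + x) * (2 * F x * f x))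
          - F τ₂ * ∫ x in Set.Ioi τ₂, Real.log (1 + x) * f x := by
      rw [← integral_const_mul, ← integral_sub hC (hlogf.integrableOn.const_mul (F τ₂)),
        ← integral_add hA hB2]
      exact setIntegral_congr_fun measurableSet_Ioi fun y _ => by ring
    rw [e1, hFub, e2]
  have hJc : J c = (∫ x in Set.Ioc c τ₂, Real.log (1 + x) * f x)
      + ∫ x in Set.Ioi τ₂, Real.log (1 + x) * f x := by
    rw [hJ]
    rw [← setIntegral_union (Set.Ioc_disjoint_Ioi le_rfl) measurableSet_Ioi
      hlogf.integrableOn hlogf.integrableOn, Set.Ioc_union_Ioi_eq_Ioi hcτ₂]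
  have hIci : ∫ y in Set.Ici τ₂, (if τ₂ ≤ y then Real.log (1 + y) * F y + J y
      else Real.log (1 + c) * F c + J c) ∂W
      = ∫ y in Set.Ioi τ₂, f y * (Real.log (1 + y) * F y + J y) := by
    rw [setIntegral_congr_fun measurableSet_Ici (fun y (hy : y ∈ Set.Ici τ₂) => if_pos (show τ₂ ≤ y from hy)),
      hWsetint _ _ measurableSet_Ici, integral_Ici_eq_integral_Ioi]
  rw [hLHS, hswap, hiter, hfun, ← hsplit2, hIio, hIci, hcomb, hJc,
    intervalIntegral.integral_of_le hcτ₂]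
  ring
end

section
/- Let F be a continuous cumulative distribution function with F(0) = 0 and a density f supported on [0,∞), so that F is strictly increasing on [0,∞) with inverse F⁻¹ : [0,1) → [0,∞). Assume f is bounded in a neighborhood of 0, f is differentiable, and f′(F⁻¹(x)) ≤ −f(F⁻¹(x))/(1 + F⁻¹(x)) for all x ∈ [0,1). Let X and Y be independent random variables with common cdf F, fix λ ∈ (0,2] and a constant c ≥ 0. Then the map q ↦ E[ log(1 + max( X·1{X ≥ F⁻¹(1−(λ−q))}, Y·1{Y ≥ F⁻¹(1−q)}, c )) ] is nondecreasing in q on the interval max(0, λ−1) < q ≤ λ/2. -/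
/-!
STATEMENT 5 (Lemma 5 of the paper): under the stated density conditions
(`f` bounded near `0`, and `f′(F⁻¹(x)) ≤ −f(F⁻¹(x))/(1 + F⁻¹(x))` on `[0,1)`),
for fixed total feedback probability `λ ∈ (0,2]` and any constant `c ≥ 0`, the map
`q ↦ E[log(1 + max(X·1{X ≥ F⁻¹(1−(λ−q))}, Y·1{Y ≥ F⁻¹(1−q)}, c))]`
is nondecreasing on `max(0, λ−1) < q ≤ λ/2`.
-/

open MeasureTheory ProbabilityTheory

open Set
set_option maxHeartbeats 1000000


private lemma log_identity {c T : ℝ} (hc : 0 ≤ c) (hcT : c ≤ T) :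
    Real.log (1+T) - Real.log (1+c)
      = ∫ t in Set.Ioi c, (if t ≤ T then 1/(1+t) else 0) := by
  have h1 : ∀ t ∈ Set.Ioi c, (if t ≤ T then 1/(1+t) else 0)
      = Set.indicator (Set.Iic T) (fun t => 1/(1+t)) t := by
    intro t ht
    by_cases h : t ≤ T <;> simp [Set.indicator, h]
  rw [setIntegral_congr_fun measurableSet_Ioi h1, setIntegral_indicator measurableSet_Iic,
    Set.Ioi_inter_Iic, ← intervalIntegral.integral_of_le hcT]
  have hderiv : ∀ t ∈ Set.uIcc c T, HasDerivAt (fun x => Real.log (1+x)) (1/(1+t)) t := by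
    intro t ht
    rw [Set.uIcc_of_le hcT] at ht
    have h1t : (1:ℝ) + t ≠ 0 := by nlinarith [ht.1]
    have : HasDerivAt (fun x : ℝ => 1 + x) 1 t := by
      simpa using (hasDerivAt_id t).const_add 1
    rw [one_div]; exact ((Real.hasDerivAt_log h1t).comp t this).congr_deriv (mul_one _)
  have hint : IntervalIntegrable (fun t => 1/(1+t)) volume c T := by
    apply ContinuousOn.intervalIntegrable
    apply ContinuousOn.div continuousOn_const (by fun_prop)
    intro t ht
    rw [Set.uIcc_of_le hcT] at ht
    nlinarith [ht.1]
  rw [intervalIntegral.integral_eq_sub_of_hasDerivAt hderiv hint]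

private lemma layer {Ω : Type*} [MeasurableSpace Ω] (μ : Measure Ω) [IsProbabilityMeasure μ]
    {T : Ω → ℝ} (hT : Measurable T) {c : ℝ} (hc : 0 ≤ c) (hcT : ∀ ω, c ≤ T ω) :
    ∫⁻ ω, ENNReal.ofReal (Real.log (1+T ω) - Real.log (1+c)) ∂μ
      = ∫⁻ t in Set.Ioi c, ENNReal.ofReal (1/(1+t)) * μ {ω | t ≤ T ω} := by
  have key : ∀ ω, ENNReal.ofReal (Real.log (1+T ω) - Real.log (1+c))
      = ∫⁻ t in Set.Ioi c, (if t ≤ T ω then ENNReal.ofReal (1/(1+t)) else 0) := by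
    intro ω
    rw [log_identity hc (hcT ω)]
    rw [MeasureTheory.ofReal_integral_eq_lintegral_ofReal]
    · apply lintegral_congr; intro t
      by_cases h : t ≤ T ω <;> simp [h]
    · -- integrability of indicator
      have : (fun t => if t ≤ T ω then 1/(1+t) else 0)
          = Set.indicator (Set.Iic (T ω)) (fun t => 1/(1+t)) := by
        ext t; by_cases h : t ≤ T ω <;> simp [Set.indicator, h]
      rw [this, integrable_indicator_iff measurableSet_Iic, MeasureTheory.IntegrableOn,
        Measure.restrict_restrict measurableSet_Iic]
      have : Set.Iic (T ω) ∩ Set.Ioi c = Set.Ioc c (T ω) := by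
        rw [Set.inter_comm, Set.Ioi_inter_Iic]
      rw [this]
      apply IntegrableOn.mono_set _ (Set.Ioc_subset_Icc_self (a := c) (b := T ω))
      apply ContinuousOn.integrableOn_compact isCompact_Icc
      apply ContinuousOn.div continuousOn_const (by fun_prop)
      intro t ht
      nlinarith [ht.1]
    · filter_upwards [ae_restrict_mem measurableSet_Ioi] with t ht
      by_cases h : t ≤ T ω <;> simp [h]
      have : (0:ℝ) < 1 + t := by have := ht.out; linarith
      positivity
  simp_rw [key]
  rw [lintegral_lintegral_swap]
  · apply setLIntegral_congr_fun_ae measurableSet_Ioi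
    filter_upwards with t _
    have : ∀ ω, (if t ≤ T ω then ENNReal.ofReal (1/(1+t)) else 0)
        = Set.indicator {ω | t ≤ T ω} (fun _ => ENNReal.ofReal (1/(1+t))) ω := by
      intro ω; by_cases h : t ≤ T ω <;> simp [Set.indicator, h]
    simp_rw [this]
    rw [lintegral_indicator (measurableSet_le measurable_const hT)]
    simp [mul_comm]
  · have : Function.uncurry (fun ω t => if t ≤ T ω then ENNReal.ofReal (1/(1+t)) else 0)
        = Set.indicator {p : Ω × ℝ | p.2 ≤ T p.1}
            (fun p => ENNReal.ofReal (1/(1+p.2))) := by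
      ext p
      by_cases h : p.2 ≤ T p.1 <;> simp [Function.uncurry, Set.indicator, h]
    rw [this]
    exact ((ENNReal.measurable_ofReal.comp (by fun_prop)).indicator
      (measurableSet_le measurable_snd (hT.comp measurable_fst))).aemeasurable

private lemma poly_deriv (lam : ℝ) (q : ℝ) :
    HasDerivAt (fun x : ℝ => (1-lam+x)*(1-x)) (lam-2*q) q := by
  have h := (((hasDerivAt_id q).const_add (1-lam)).mul ((hasDerivAt_id q).neg.const_add 1))
  refine (h.congr_deriv ?_).congr_of_eventuallyEq (Filter.Eventually.of_forall fun x => ?_)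
  · simp only [Pi.neg_apply, id_eq]; ring
  · simp only [Pi.mul_apply, Pi.neg_apply, id_eq]; ring

private lemma q_identity (lam q₁ q₂ u : ℝ) (hq₁0 : 0 < q₁)
    (hq₁₂ : q₁ ≤ q₂) (hq₂ : q₂ ≤ lam/2) (hu0 : 0 ≤ u) (hu1 : u ≤ 1) :
    max (1-lam+q₁) u * max (1-q₁) u - max (1-lam+q₂) u * max (1-q₂) u
      = ∫ q in q₁..q₂, ((if 1-lam+q < u ∧ u < 1-q then u else 0)
          - (if u ≤ 1-lam+q then lam-2*q else 0)) := by
  set G : ℝ → ℝ := fun q => max (1-lam+q) u * max (1-q) u with hG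
  set h : ℝ → ℝ := fun q => (if u ≤ 1-lam+q then lam-2*q else 0)
      - (if 1-lam+q < u ∧ u < 1-q then u else 0) with hh
  have hint : IntervalIntegrable h volume q₁ q₂ := by
    have m1 : Measurable fun q : ℝ => (if u ≤ 1-lam+q then lam-2*q else 0) := by
      apply Measurable.ite _ (by fun_prop) measurable_const
      have : {q : ℝ | u ≤ 1-lam+q} = Set.Ici (u-1+lam) := by ext q; simp; constructor <;> intro <;> linarith
      rw [this]; exact measurableSet_Ici
    have m2 : Measurable fun q : ℝ => (if 1-lam+q < u ∧ u < 1-q then u else 0) := by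
      apply Measurable.ite _ measurable_const measurable_const
      have : {q : ℝ | 1-lam+q < u ∧ u < 1-q} = Set.Iio (u-1+lam) ∩ Set.Iio (1-u) := by
        ext q; simp; constructor <;> rintro ⟨h1, h2⟩ <;> constructor <;> linarith
      rw [this]; exact (measurableSet_Iio.inter measurableSet_Iio)
    rw [intervalIntegrable_iff, Set.uIoc_of_le hq₁₂]
    apply Integrable.mono' (g := fun _ => |lam| + 2*|q₁| + 2*|q₂| + |u|)
      (integrableOn_const measure_Ioc_lt_top.ne) ((m1.sub m2).aestronglyMeasurable)
    filter_upwards [ae_restrict_mem measurableSet_Ioc] with q hq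
    have hq' : q₁ ≤ q ∧ q ≤ q₂ := ⟨hq.1.le, hq.2⟩
    simp only [Real.norm_eq_abs]
    have b1 : |(if u ≤ 1-lam+q then lam-2*q else 0)| ≤ |lam| + 2*|q₁| + 2*|q₂| := by
      split
      · rw [abs_le]; constructor <;> cases abs_cases lam <;> cases abs_cases q₁ <;>
          cases abs_cases q₂ <;> nlinarith [hq'.1, hq'.2]
      · simp; positivity
    have b2 : |(if 1-lam+q < u ∧ u < 1-q then u else 0)| ≤ |u| := by
      split
      · exact le_refl _
      · simp
    calc |(if u ≤ 1-lam+q then lam-2*q else 0) - (if 1-lam+q < u ∧ u < 1-q then u else 0)|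
        ≤ |(if u ≤ 1-lam+q then lam-2*q else 0)| + |(if 1-lam+q < u ∧ u < 1-q then u else 0)| :=
          abs_sub _ _
      _ ≤ (|lam| + 2*|q₁| + 2*|q₂|) + |u| := add_le_add b1 b2
      _ = |lam| + 2*|q₁| + 2*|q₂| + |u| := by ring
  have hcont : ContinuousOn G (Set.Icc q₁ q₂) := by
    apply Continuous.continuousOn; fun_prop
  have hderiv : ∀ q ∈ Set.Ioo q₁ q₂, HasDerivWithinAt G (h q) (Set.Ioi q) q := by
    intro q hq
    have hαβ : 1-lam+q < 1-q := by have := hq.2; nlinarith [hq₂]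
    rcases lt_trichotomy u (1-lam+q) with h1 | h1 | h1
    · -- u < α(q) : G locally = (1-lam+q')(1-q'), h q = lam-2q
      have he : G =ᶠ[nhds q] fun x => (1-lam+x)*(1-x) := by
        have e1 : ∀ᶠ x in nhds q, u < 1-lam+x := by
          have : Continuous fun x : ℝ => 1-lam+x := by fun_prop
          exact this.continuousAt.eventually_const_lt h1
        have e2 : ∀ᶠ x in nhds q, u < 1-x := by
          have : Continuous fun x : ℝ => 1-x := by fun_prop
          exact this.continuousAt.eventually_const_lt (show u < 1-q by linarith)
        filter_upwards [e1, e2] with x hx1 hx2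
        simp [hG, max_eq_left hx1.le, max_eq_left hx2.le]
      have : HasDerivAt G (lam-2*q) q := (poly_deriv lam q).congr_of_eventuallyEq he
      have hval : h q = lam-2*q := by
        simp only [hh]
        rw [if_pos (le_of_lt h1), if_neg (by push_neg; intro hcon; linarith)]
        ring
      rw [hval]; exact this.hasDerivWithinAt
    · -- u = α(q)
      have hub : u < 1-q := by linarith
      have he : G =ᶠ[nhdsWithin q (Set.Ioi q)] fun x => (1-lam+x)*(1-x) := by
        have e2 : ∀ᶠ x in nhdsWithin q (Set.Ioi q), u < 1-x := by
          apply Filter.Eventually.filter_mono nhdsWithin_le_nhds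
          have : Continuous fun x : ℝ => 1-x := by fun_prop
          exact this.continuousAt.eventually_const_lt hub
        filter_upwards [e2, self_mem_nhdsWithin] with x hx2 hx1
        have : u ≤ 1-lam+x := by have : (q:ℝ) < x := hx1; linarith
        simp [hG, max_eq_left this, max_eq_left hx2.le]
      have hval : G q = (1-lam+q)*(1-q) := by
        simp [hG, ← h1, max_self, max_eq_left hub.le]
      have : HasDerivWithinAt G (lam-2*q) (Set.Ioi q) q :=
        ((poly_deriv lam q).hasDerivWithinAt).congr_of_eventuallyEq he hval
      have hv2 : h q = lam-2*q := by
        simp only [hh]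
        rw [if_pos (le_of_eq h1), if_neg (by push_neg; intro hcon; linarith)]
        ring
      rw [hv2]; exact this
    · rcases lt_trichotomy u (1-q) with h2 | h2 | h2
      · -- α < u < β : G locally = u*(1-q'), deriv -u
        have he : G =ᶠ[nhds q] fun x => u*(1-x) := by
          have e1 : ∀ᶠ x in nhds q, 1-lam+x < u := by
            have : Continuous fun x : ℝ => 1-lam+x := by fun_prop
            exact this.continuousAt.eventually_lt_const h1
          have e2 : ∀ᶠ x in nhds q, u < 1-x := by
            have : Continuous fun x : ℝ => 1-x := by fun_prop
            exact this.continuousAt.eventually_const_lt h2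
          filter_upwards [e1, e2] with x hx1 hx2
          simp [hG, max_eq_right hx1.le, max_eq_left hx2.le]
        have hd : HasDerivAt (fun x : ℝ => u*(1-x)) (-u) q := by
          have := ((hasDerivAt_id q).neg.const_add 1).const_mul u
          refine (this.congr_deriv ?_).congr_of_eventuallyEq (Filter.Eventually.of_forall fun x => ?_)
          · ring
          · simp only [Pi.neg_apply, id_eq]; ring
        have : HasDerivAt G (-u) q := hd.congr_of_eventuallyEq he
        have hval : h q = -u := by
          simp only [hh]
          rw [if_neg (by linarith), if_pos ⟨h1, h2⟩]
          ring
        rw [hval]; exact this.hasDerivWithinAt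
      · -- u = β(q)
        have he : G =ᶠ[nhdsWithin q (Set.Ioi q)] fun _ => u*u := by
          have e1 : ∀ᶠ x in nhdsWithin q (Set.Ioi q), 1-lam+x < u := by
            apply Filter.Eventually.filter_mono nhdsWithin_le_nhds
            have : Continuous fun x : ℝ => 1-lam+x := by fun_prop
            exact this.continuousAt.eventually_lt_const h1
          filter_upwards [e1, self_mem_nhdsWithin] with x hx1 hx2
          have : 1-x ≤ u := by have : (q:ℝ) < x := hx2; linarith
          simp [hG, max_eq_right hx1.le, max_eq_right this]
        have hval : G q = u*u := by
          simp [hG, max_eq_right h1.le, ← h2, max_self]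
        have : HasDerivWithinAt G 0 (Set.Ioi q) q :=
          ((hasDerivAt_const q (u*u)).hasDerivWithinAt).congr_of_eventuallyEq he hval
        have hv2 : h q = 0 := by
          simp only [hh]
          rw [if_neg (by linarith), if_neg (by push_neg; intro _; linarith)]
          ring
        rw [hv2]; exact this
      · -- u > β(q)
        have he : G =ᶠ[nhds q] fun _ => u*u := by
          have e1 : ∀ᶠ x in nhds q, 1-lam+x < u := by
            have : Continuous fun x : ℝ => 1-lam+x := by fun_prop
            exact this.continuousAt.eventually_lt_const h1
          have e2 : ∀ᶠ x in nhds q, 1-x < u := by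
            have : Continuous fun x : ℝ => 1-x := by fun_prop
            exact this.continuousAt.eventually_lt_const h2
          filter_upwards [e1, e2] with x hx1 hx2
          simp [hG, max_eq_right hx1.le, max_eq_right hx2.le]
        have : HasDerivAt G 0 q := (hasDerivAt_const q (u*u)).congr_of_eventuallyEq he
        have hv2 : h q = 0 := by
          simp only [hh]
          rw [if_neg (by linarith), if_neg (by push_neg; intro _; linarith)]
          ring
        rw [hv2]; exact this.hasDerivWithinAt
  have key := intervalIntegral.integral_eq_sub_of_hasDeriv_right_of_le hq₁₂ hcont hderiv hint
  have : (∫ q in q₁..q₂, ((if 1-lam+q < u ∧ u < 1-q then u else 0)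
      - (if u ≤ 1-lam+q then lam-2*q else 0))) = - ∫ q in q₁..q₂, h q := by
    rw [← intervalIntegral.integral_neg]
    apply intervalIntegral.integral_congr
    intro q _
    simp only [hh]; ring
  rw [this, key]
  simp only [hG]
  ring

private lemma J_nonneg (F f : ℝ → ℝ) (c B a b α β : ℝ)
    (hc : 0 ≤ c) (ha0 : 0 ≤ a) (hab : a ≤ b) (hbB : b ≤ B)
    (hFcont : Continuous F)
    (hFnonneg : ∀ t, 0 ≤ F t)
    (hFmono : Monotone F)
    (hFa : F a = α) (hFb : F b = β)
    (hfa : 0 < f a) (hfnonneg : ∀ t : ℝ, 0 ≤ t → 0 ≤ f t)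
    (hf_int : ∀ x y : ℝ, IntegrableOn f (Set.Ioc x y) volume)
    (hFdiff : ∀ x y : ℝ, 0 ≤ x → x ≤ y → F y - F x = ∫ t in Set.Ioc x y, f t)
    (hdec : ∀ s t : ℝ, 0 ≤ s → s ≤ t → (1+t)*f t ≤ (1+s)*f s)
    (hiff1 : ∀ t, 0 < t → (F t ≤ α ↔ t ≤ a))
    (hiff2 : ∀ t, 0 < t → (F t < β ↔ t < b))
    (d : ℝ) (hd : β - α = d) :
    0 ≤ ∫ t in Set.Ioc c B, ((if α < F t ∧ F t < β then F t else 0)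
        - (if F t ≤ α then d else 0)) * (1/(1+t)) := by
  subst hd
  have hαβ : α ≤ β := by rw [← hFa, ← hFb]; exact hFmono hab
  have hα0 : 0 ≤ α := hFa ▸ hFnonneg a
  have hcongr : ∀ t ∈ Set.Ioc c B,
      ((if α < F t ∧ F t < β then F t else 0) - (if F t ≤ α then β-α else 0)) * (1/(1+t))
      = Set.indicator (Set.Ioo a b) (fun t => F t * (1/(1+t))) t
        - Set.indicator (Set.Iic a) (fun t => (β-α) * (1/(1+t))) t := by
    intro t ht
    have ht0 : 0 < t := lt_of_le_of_lt hc ht.1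
    have e1a := not_congr (hiff1 t ht0)
    rw [not_le, not_le] at e1a
    have e1 : (α < F t ∧ F t < β) ↔ (a < t ∧ t < b) := and_congr e1a (hiff2 t ht0)
    have e2 : (F t ≤ α) ↔ t ≤ a := hiff1 t ht0
    by_cases h1 : a < t ∧ t < b <;> by_cases h2 : t ≤ a <;>
      simp [Set.indicator, e1, e2, h1, h2, Set.mem_Ioo, Set.mem_Iic] <;> ring
  rw [setIntegral_congr_fun measurableSet_Ioc hcongr]
  have hw_cont : ∀ x y : ℝ, 0 ≤ x → ContinuousOn (fun t : ℝ => 1/(1+t)) (Set.Icc x y) := by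
    intro x y hx
    apply ContinuousOn.div continuousOn_const (by fun_prop)
    intro t ht; nlinarith [ht.1]
  have hint1 : IntegrableOn (Set.indicator (Set.Ioo a b)
      (fun t => F t * (1/(1+t)))) (Set.Ioc c B) volume := by
    rw [MeasureTheory.IntegrableOn, integrable_indicator_iff measurableSet_Ioo,
      MeasureTheory.IntegrableOn, Measure.restrict_restrict measurableSet_Ioo]
    apply IntegrableOn.mono_set (t := Set.Icc a b)
    · apply ContinuousOn.integrableOn_compact isCompact_Icc
      exact (hFcont.continuousOn).mul (hw_cont a b ha0)
    · exact fun t ht => Set.Ioo_subset_Icc_self ht.1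
  have hint2 : IntegrableOn (Set.indicator (Set.Iic a)
      (fun t => (β-α) * (1/(1+t)))) (Set.Ioc c B) volume := by
    rw [MeasureTheory.IntegrableOn, integrable_indicator_iff measurableSet_Iic,
      MeasureTheory.IntegrableOn, Measure.restrict_restrict measurableSet_Iic]
    apply IntegrableOn.mono_set (t := Set.Icc c a)
    · apply ContinuousOn.integrableOn_compact isCompact_Icc
      exact continuousOn_const.mul (hw_cont c a hc)
    · intro t ht; exact ⟨le_of_lt ht.2.1, ht.1⟩
  rw [integral_sub hint1 hint2, sub_nonneg,
    setIntegral_indicator measurableSet_Ioo, setIntegral_indicator measurableSet_Iic]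
  have hset2 : Set.Ioc c B ∩ Set.Iic a = Set.Ioc c a := by
    ext t; simp only [Set.mem_inter_iff, Set.mem_Ioc, Set.mem_Iic]
    constructor
    · rintro ⟨⟨h1, _⟩, h3⟩; exact ⟨h1, h3⟩
    · rintro ⟨h1, h2⟩; exact ⟨⟨h1, le_trans h2 (le_trans hab hbB)⟩, h2⟩
  rw [hset2]
  by_cases hca : a ≤ c
  · rw [Set.Ioc_eq_empty (by simpa using hca)]
    simp only [Measure.restrict_empty, integral_zero_measure]
    apply setIntegral_nonneg (measurableSet_Ioc.inter measurableSet_Ioo)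
    intro t ht
    have ht0 : 0 < t := lt_of_le_of_lt hc ht.1.1
    have : (0:ℝ) < 1 + t := by linarith
    have := hFnonneg t
    positivity
  · push_neg at hca
    have hset1 : Set.Ioc c B ∩ Set.Ioo a b = Set.Ioo a b := by
      apply Set.inter_eq_self_of_subset_right
      intro t ht
      exact ⟨lt_trans hca ht.1, le_trans (le_of_lt ht.2) hbB⟩
    rw [hset1]
    set K : ℝ := (1+a) * f a with hKdef
    have hK : 0 < K := by
      have h1a : (0:ℝ) < 1 + a := by linarith
      rw [hKdef]
      positivity
    -- A1 : ∫_{Ioc c a} w ≤ (F a - F c)/K ≤ α/K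
    have hwint : IntegrableOn (fun t : ℝ => 1/(1+t)) (Set.Ioc c a) volume := by
      apply IntegrableOn.mono_set (t := Set.Icc c a)
      · exact ContinuousOn.integrableOn_compact isCompact_Icc (hw_cont c a hc)
      · exact Set.Ioc_subset_Icc_self
    have A1 : ∫ t in Set.Ioc c a, (1/(1+t)) ≤ ∫ t in Set.Ioc c a, f t / K := by
      apply setIntegral_mono_on hwint ((hf_int c a).div_const K) measurableSet_Ioc
      intro t ht
      have ht0 : 0 < t := lt_of_le_of_lt hc ht.1
      have h1t : (0:ℝ) < 1 + t := by linarith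
      rw [div_le_div_iff₀ h1t hK]
      have := hdec t a (le_of_lt ht0) ht.2
      nlinarith
    have hIocf : ∫ t in Set.Ioc c a, f t = α - F c := by
      rw [← hFa, ← hFdiff c a hc hca.le]
    have A2 : ∫ t in Set.Ioc c a, f t / K ≤ α / K := by
      rw [integral_div]
      gcongr
      have := hFnonneg c
      linarith [hIocf]
    have hIoof : ∫ t in Set.Ioo a b, f t = β - α := by
      rw [← MeasureTheory.integral_Ioc_eq_integral_Ioo, ← hFa, ← hFb, ← hFdiff a b ha0 hab]
    have A3 : α * ((β - α)/K) ≤ ∫ t in Set.Ioo a b, F t * (1/(1+t)) := by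
      have hmono : ∫ t in Set.Ioo a b, α * (f t / K) ≤ ∫ t in Set.Ioo a b, F t * (1/(1+t)) := by
        apply setIntegral_mono_on
        · exact (((hf_int a b).mono_set Set.Ioo_subset_Ioc_self).div_const K).const_mul α
        · apply IntegrableOn.mono_set (t := Set.Icc a b)
          · exact ContinuousOn.integrableOn_compact isCompact_Icc
              ((hFcont.continuousOn).mul (hw_cont a b ha0))
          · exact Set.Ioo_subset_Icc_self
        · exact measurableSet_Ioo
        · intro t ht
          have ht0 : 0 < t := lt_of_le_of_lt ha0 ht.1
          have h1t : (0:ℝ) < 1 + t := by linarith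
          have hfw : f t / K ≤ 1/(1+t) := by
            rw [div_le_div_iff₀ hK h1t]
            have := hdec a t ha0 (le_of_lt ht.1)
            nlinarith
          have hFt : α ≤ F t := hFa ▸ hFmono (le_of_lt ht.1)
          have hw0 : 0 ≤ 1/(1+t) := by positivity
          have hf0 : 0 ≤ f t / K := div_nonneg (hfnonneg t ht0.le) hK.le
          calc α * (f t / K) ≤ α * (1/(1+t)) := by nlinarith
            _ ≤ F t * (1/(1+t)) := by nlinarith
      have hcalc : ∫ t in Set.Ioo a b, α * (f t / K) = α * ((β - α)/K) := by
        rw [MeasureTheory.integral_const_mul, MeasureTheory.integral_div, hIoof]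
      linarith [hmono, hcalc.symm.le]
    rw [MeasureTheory.integral_const_mul]
    calc (β - α) * ∫ t in Set.Ioc c a, 1/(1+t)
        ≤ (β - α) * (α / K) := by
          have h1 : ∫ t in Set.Ioc c a, 1/(1+t) ≤ α / K := le_trans A1 A2
          nlinarith
      _ = α * ((β - α)/K) := by ring
      _ ≤ ∫ t in Set.Ioo a b, F t * (1/(1+t)) := A3

theorem rate_nondecreasing_in_q
    {Ω : Type*} [MeasurableSpace Ω] (μ : Measure Ω) [IsProbabilityMeasure μ]
    (X Y : Ω → ℝ) (hXm : Measurable X) (hYm : Measurable Y)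
    (hX0 : ∀ ω, 0 ≤ X ω) (hY0 : ∀ ω, 0 ≤ Y ω)
    (hindep : IndepFun X Y μ)
    (F f f' Finv : ℝ → ℝ)
    (hFX : ∀ x, F x = (μ {ω | X ω ≤ x}).toReal)
    (hFY : ∀ x, F x = (μ {ω | Y ω ≤ x}).toReal)
    (hFcont : Continuous F) (hF0 : F 0 = 0)
    (hFdens : ∀ x, F x = ∫ t in Set.Iic x, f t)
    (hfpos : ∀ x, 0 ≤ x → 0 < f x) (hfneg : ∀ x, x < 0 → f x = 0)
    -- F is strictly increasing on [0,∞) with (right-)inverse Finv : [0,1) → [0,∞)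
    (hFmono : StrictMonoOn F (Set.Ici 0))
    (hFinv : ∀ q, 0 ≤ q → q < 1 → F (Finv q) = q ∧ 0 ≤ Finv q)
    (hFinvF : ∀ x, 0 ≤ x → Finv (F x) = x)
    -- f is bounded in a neighborhood of 0
    (hfbdd : ∃ ε > (0 : ℝ), ∃ C : ℝ, ∀ x, |x| ≤ ε → f x ≤ C)
    -- f is differentiable (on the support [0,∞)) with derivative f'
    (hf'deriv : ∀ x, 0 ≤ x → HasDerivWithinAt f (f' x) (Set.Ici 0) x)
    (hcond : ∀ x, 0 ≤ x → x < 1 → f' (Finv x) ≤ - f (Finv x) / (1 + Finv x))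
    (hInt : Integrable (fun ω => Real.log (1 + max (X ω) (Y ω))) μ)
    (lam : ℝ) (hlam0 : 0 < lam) (hlam2 : lam ≤ 2)
    (c : ℝ) (hc : 0 ≤ c)
    (q₁ q₂ : ℝ) (hq₁ : max 0 (lam - 1) < q₁) (hq₁₂ : q₁ ≤ q₂) (hq₂ : q₂ ≤ lam / 2) :
    ∫ ω, Real.log (1 + max (max (if Finv (1 - (lam - q₁)) ≤ X ω then X ω else 0)
        (if Finv (1 - q₁) ≤ Y ω then Y ω else 0)) c) ∂μ
      ≤ ∫ ω, Real.log (1 + max (max (if Finv (1 - (lam - q₂)) ≤ X ω then X ω else 0)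
        (if Finv (1 - q₂) ≤ Y ω then Y ω else 0)) c) ∂μ := by
  -- ### scalar facts
  have hq₁0 : 0 < q₁ := lt_of_le_of_lt (le_max_left _ _) hq₁
  have hql1 : lam - 1 < q₁ := lt_of_le_of_lt (le_max_right _ _) hq₁
  have hq₂0 : 0 < q₂ := lt_of_lt_of_le hq₁0 hq₁₂
  have hq₂lam : q₂ < lam := lt_of_le_of_lt hq₂ (by linarith)
  have hq₁lam : q₁ < lam := lt_of_le_of_lt hq₁₂ hq₂lam
  have hq₁half : q₁ ≤ lam/2 := le_trans hq₁₂ hq₂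
  -- ### basic F facts
  have hFmono' : Monotone F := by
    intro s t hst
    rw [hFX s, hFX t]
    exact ENNReal.toReal_mono (measure_ne_top _ _)
      (measure_mono (fun ω hω => le_trans hω hst))
  have hF0' : ∀ t, 0 ≤ F t := fun t => by rw [hFX t]; exact ENNReal.toReal_nonneg
  have hF1 : ∀ t, F t ≤ 1 := fun t => by
    rw [hFX t]
    have := prob_le_one (μ := μ) (s := {ω | X ω ≤ t})
    exact le_trans (ENNReal.toReal_mono (by simp) this) (by simp)
  have hFlt1 : ∀ t, 0 ≤ t → F t < 1 :=
    fun t ht => lt_of_lt_of_le (hFmono (Set.mem_Ici.2 ht) (Set.mem_Ici.2 (by linarith))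
      (lt_add_one t)) (hF1 (t+1))
  have hXle : ∀ s, μ {ω | X ω ≤ s} = ENNReal.ofReal (F s) := fun s => by
    rw [hFX s, ENNReal.ofReal_toReal (measure_ne_top _ _)]
  have hYle : ∀ s, μ {ω | Y ω ≤ s} = ENNReal.ofReal (F s) := fun s => by
    rw [hFY s, ENNReal.ofReal_toReal (measure_ne_top _ _)]
  have hXlt : ∀ s, μ {ω | X ω < s} = ENNReal.ofReal (F s) := by
    intro s
    apply le_antisymm
    · calc μ {ω | X ω < s} ≤ μ {ω | X ω ≤ s} :=
            measure_mono (fun ω hω => (le_of_lt (hω : X ω < s) : X ω ≤ s))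
        _ = ENNReal.ofReal (F s) := hXle s
    · have htend : Filter.Tendsto (fun n : ℕ => ENNReal.ofReal (F (s - 1/(n+1))))
          Filter.atTop (nhds (ENNReal.ofReal (F s))) := by
        apply (ENNReal.continuous_ofReal.tendsto _).comp
        apply (hFcont.tendsto s).comp
        have : Filter.Tendsto (fun n : ℕ => s - 1/(n+1)) Filter.atTop (nhds (s - 0)) :=
          (tendsto_const_nhds).sub tendsto_one_div_add_atTop_nhds_zero_nat
        simpa using this
      apply le_of_tendsto htend
      filter_upwards with n
      rw [← hXle]
      apply measure_mono
      intro ω hω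
      simp only [Set.mem_setOf_eq] at hω ⊢
      have h1 : (0:ℝ) < 1/((n:ℝ)+1) := by positivity
      linarith
  have hYlt : ∀ s, μ {ω | Y ω < s} = ENNReal.ofReal (F s) := by
    intro s
    apply le_antisymm
    · calc μ {ω | Y ω < s} ≤ μ {ω | Y ω ≤ s} :=
            measure_mono (fun ω hω => (le_of_lt (hω : Y ω < s) : Y ω ≤ s))
        _ = ENNReal.ofReal (F s) := hYle s
    · have htend : Filter.Tendsto (fun n : ℕ => ENNReal.ofReal (F (s - 1/(n+1))))
          Filter.atTop (nhds (ENNReal.ofReal (F s))) := by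
        apply (ENNReal.continuous_ofReal.tendsto _).comp
        apply (hFcont.tendsto s).comp
        have : Filter.Tendsto (fun n : ℕ => s - 1/(n+1)) Filter.atTop (nhds (s - 0)) :=
          (tendsto_const_nhds).sub tendsto_one_div_add_atTop_nhds_zero_nat
        simpa using this
      apply le_of_tendsto htend
      filter_upwards with n
      rw [← hYle]
      apply measure_mono
      intro ω hω
      simp only [Set.mem_setOf_eq] at hω ⊢
      have h1 : (0:ℝ) < 1/((n:ℝ)+1) := by positivity
      linarith
  -- ### density facts
  have hfnonneg : ∀ t : ℝ, 0 ≤ t → 0 ≤ f t := fun t ht => (hfpos t ht).le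
  have hdec : ∀ s t : ℝ, 0 ≤ s → s ≤ t → (1+t)*f t ≤ (1+s)*f s := by
    have hanti : AntitoneOn (fun t => (1+t)*f t) (Set.Ici 0) := by
      have hcontf : ContinuousOn f (Set.Ici 0) :=
        fun x hx => (hf'deriv x hx).continuousWithinAt
      apply antitoneOn_of_hasDerivWithinAt_nonpos (convex_Ici 0)
        (f' := fun x => f x + (1+x) * f' x)
      · exact (continuousOn_const.add continuousOn_id).mul hcontf
      · intro x hx
        rw [interior_Ici] at hx ⊢
        have h1 : HasDerivWithinAt (fun t : ℝ => 1+t) 1 (Set.Ioi 0) x :=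
          ((hasDerivAt_id x).const_add 1).hasDerivWithinAt
        have h2 : HasDerivWithinAt f (f' x) (Set.Ioi 0) x :=
          (hf'deriv x (le_of_lt hx)).mono Set.Ioi_subset_Ici_self
        have := h1.mul h2
        exact this.congr_deriv (by ring)
      · intro x hx
        rw [interior_Ici] at hx
        have hx0 : (0:ℝ) < x := hx
        have h1x : (0:ℝ) < 1 + x := by linarith
        have hcd := hcond (F x) (hF0' x) (hFlt1 x hx0.le)
        rw [hFinvF x hx0.le] at hcd
        have : f' x * (1+x) ≤ -f x := by
          rw [div_eq_mul_inv] at hcd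
          calc f' x * (1+x) ≤ (-f x * (1+x)⁻¹) * (1+x) := by
                apply mul_le_mul_of_nonneg_right hcd h1x.le
            _ = -f x := by field_simp
        linarith
    intro s t hs hst
    exact hanti (Set.mem_Ici.2 hs) (Set.mem_Ici.2 (le_trans hs hst)) hst
  have hIic : ∀ y : ℝ, IntegrableOn f (Set.Iic y) volume := by
    have h0 : IntegrableOn f (Set.Iic 0) volume := by
      have hae : f =ᵐ[volume.restrict (Set.Iic (0:ℝ))] 0 := by
        rw [Filter.EventuallyEq, ae_restrict_iff' measurableSet_Iic]
        have hne : ∀ᵐ t : ℝ ∂volume, t ≠ 0 := by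
          rw [ae_iff]
          have : {t : ℝ | ¬ t ≠ 0} = {0} := by ext t; simp
          rw [this]
          exact Real.volume_singleton
        filter_upwards [hne] with t ht hle
        exact hfneg t (lt_of_le_of_ne hle ht)
      exact (integrable_zero _ _ _).congr hae.symm
    intro y
    rcases le_or_gt y 0 with hy | hy
    · exact h0.mono_set (Set.Iic_subset_Iic.2 hy)
    · by_contra hni
      have h1 : F y = 0 := by rw [hFdens y, integral_undef hni]
      have h2 : 0 < F y := by
        rw [← hF0]
        exact hFmono (Set.mem_Ici.2 le_rfl) (Set.mem_Ici.2 hy.le) hy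
      linarith
  have hf_int : ∀ x y : ℝ, IntegrableOn f (Set.Ioc x y) volume :=
    fun x y => (hIic y).mono_set Set.Ioc_subset_Iic_self
  have hFdiff : ∀ x y : ℝ, 0 ≤ x → x ≤ y → F y - F x = ∫ t in Set.Ioc x y, f t := by
    intro x y _ hxy
    rw [hFdens x, hFdens y, intervalIntegral.integral_Iic_sub_Iic (hIic x) (hIic y),
      intervalIntegral.integral_of_le hxy]
  -- ### Finv facts
  have hFinvmono : ∀ p p' : ℝ, 0 ≤ p → p' < 1 → p ≤ p' → Finv p ≤ Finv p' := by
    intro p p' hp0 hp1 hpp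
    obtain ⟨he, h0⟩ := hFinv p hp0 (lt_of_le_of_lt hpp hp1)
    obtain ⟨he', h0'⟩ := hFinv p' (le_trans hp0 hpp) hp1
    by_contra hcon
    push_neg at hcon
    have := hFmono (Set.mem_Ici.2 h0') (Set.mem_Ici.2 h0) hcon
    rw [he, he'] at this
    linarith

  -- ### threshold facts
  have hα₁0 : (0:ℝ) ≤ 1 - (lam - q₁) := by linarith
  have hα₁1 : 1 - (lam - q₁) < 1 := by linarith
  have hα₂0 : (0:ℝ) ≤ 1 - (lam - q₂) := by linarith
  have hα₂1 : 1 - (lam - q₂) < 1 := by linarith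
  have hβ₁0 : (0:ℝ) ≤ 1 - q₁ := by linarith
  have hβ₁1 : 1 - q₁ < 1 := by linarith
  have hβ₂0 : (0:ℝ) ≤ 1 - q₂ := by linarith
  have hβ₂1 : 1 - q₂ < 1 := by linarith
  set a₁ := Finv (1 - (lam - q₁)) with ha₁def
  set a₂ := Finv (1 - (lam - q₂)) with ha₂def
  set b₁ := Finv (1 - q₁) with hb₁def
  set b₂ := Finv (1 - q₂) with hb₂def
  have ha₁0 : 0 ≤ a₁ := by rw [ha₁def]; exact (hFinv _ hα₁0 hα₁1).2
  have ha₂0 : 0 ≤ a₂ := by rw [ha₂def]; exact (hFinv _ hα₂0 hα₂1).2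
  have hb₁0 : 0 ≤ b₁ := by rw [hb₁def]; exact (hFinv _ hβ₁0 hβ₁1).2
  have hb₂0 : 0 ≤ b₂ := by rw [hb₂def]; exact (hFinv _ hβ₂0 hβ₂1).2
  have hFa₁ : F a₁ = 1 - lam + q₁ := by rw [ha₁def, (hFinv _ hα₁0 hα₁1).1]; ring
  have hFa₂ : F a₂ = 1 - lam + q₂ := by rw [ha₂def, (hFinv _ hα₂0 hα₂1).1]; ring
  have hFb₁ : F b₁ = 1 - q₁ := by rw [hb₁def, (hFinv _ hβ₁0 hβ₁1).1]
  have hFb₂ : F b₂ = 1 - q₂ := by rw [hb₂def, (hFinv _ hβ₂0 hβ₂1).1]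
  set B := max c b₁ with hBdef
  have hcB : c ≤ B := le_max_left _ _
  have hb₁B : b₁ ≤ B := le_max_right _ _
  -- ### the T's
  set T₁ : Ω → ℝ := fun ω => max (max (if a₁ ≤ X ω then X ω else 0)
      (if b₁ ≤ Y ω then Y ω else 0)) c with hT₁def
  set T₂ : Ω → ℝ := fun ω => max (max (if a₂ ≤ X ω then X ω else 0)
      (if b₂ ≤ Y ω then Y ω else 0)) c with hT₂def
  show (∫ ω, Real.log (1 + T₁ ω) ∂μ) ≤ ∫ ω, Real.log (1 + T₂ ω) ∂μ
  have hT₁m : Measurable T₁ :=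
    ((Measurable.ite (measurableSet_le measurable_const hXm) hXm measurable_const).max
      (Measurable.ite (measurableSet_le measurable_const hYm) hYm measurable_const)).max
      measurable_const
  have hT₂m : Measurable T₂ :=
    ((Measurable.ite (measurableSet_le measurable_const hXm) hXm measurable_const).max
      (Measurable.ite (measurableSet_le measurable_const hYm) hYm measurable_const)).max
      measurable_const
  have hcT₁ : ∀ ω, c ≤ T₁ ω := fun ω => le_max_right _ _
  have hcT₂ : ∀ ω, c ≤ T₂ ω := fun ω => le_max_right _ _
  have hTbound : ∀ (a b : ℝ) (ω : Ω), max (max (if a ≤ X ω then X ω else 0)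
      (if b ≤ Y ω then Y ω else 0)) c ≤ c + max (X ω) (Y ω) := by
    intro a b ω
    have hm0 : 0 ≤ max (X ω) (Y ω) := le_trans (hX0 ω) (le_max_left _ _)
    apply max_le _ (by linarith)
    apply max_le
    · split
      · exact le_trans (le_max_left _ _) (by linarith)
      · linarith
    · split
      · exact le_trans (le_max_right _ _) (by linarith)
      · linarith
  have hlogT : ∀ (T : Ω → ℝ), (∀ ω, c ≤ T ω) → (∀ ω, T ω ≤ c + max (X ω) (Y ω)) →
      Measurable T → Integrable (fun ω => Real.log (1 + T ω)) μ := by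
    intro T hcT hTb hTm
    apply Integrable.mono' ((integrable_const (Real.log (1+c))).add hInt)
      (Real.measurable_log.comp (measurable_const.add hTm)).aestronglyMeasurable
    filter_upwards with ω
    simp only [Function.comp_apply, Pi.add_apply]
    have h1 : (1:ℝ) ≤ 1 + T ω := by linarith [hcT ω]
    rw [Real.norm_eq_abs, abs_of_nonneg (Real.log_nonneg h1)]
    have hm0 : 0 ≤ max (X ω) (Y ω) := le_trans (hX0 ω) (le_max_left _ _)
    calc Real.log (1 + T ω) ≤ Real.log ((1+c) * (1 + max (X ω) (Y ω))) := by
          apply Real.log_le_log (by linarith)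
          nlinarith [hTb ω]
      _ = Real.log (1+c) + Real.log (1 + max (X ω) (Y ω)) :=
          Real.log_mul (by linarith) (by linarith)
  have hT₁i : Integrable (fun ω => Real.log (1 + T₁ ω)) μ :=
    hlogT T₁ hcT₁ (fun ω => hTbound a₁ b₁ ω) hT₁m
  have hT₂i : Integrable (fun ω => Real.log (1 + T₂ ω)) μ :=
    hlogT T₂ hcT₂ (fun ω => hTbound a₂ b₂ ω) hT₂m
  -- ### expectation formula
  have EQ : ∀ (T : Ω → ℝ), Measurable T → (∀ ω, c ≤ T ω) →
      Integrable (fun ω => Real.log (1 + T ω)) μ →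
      (∫ ω, Real.log (1 + T ω) ∂μ
        = Real.log (1+c)
          + (∫⁻ t in Set.Ioi c, ENNReal.ofReal (1/(1+t)) * μ {ω | t ≤ T ω}).toReal)
      ∧ (∫⁻ t in Set.Ioi c, ENNReal.ofReal (1/(1+t)) * μ {ω | t ≤ T ω}) ≠ ⊤ := by
    intro T hT hcT hTi
    have hsub : Integrable (fun ω => Real.log (1+T ω) - Real.log (1+c)) μ :=
      hTi.sub (integrable_const _)
    have hnn : 0 ≤ᵐ[μ] fun ω => Real.log (1+T ω) - Real.log (1+c) := by
      filter_upwards with ω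
      have := Real.log_le_log (x := 1+c) (y := 1 + T ω) (by linarith) (by linarith [hcT ω])
      simp only [Pi.zero_apply]
      linarith
    have h1 := integral_eq_lintegral_of_nonneg_ae hnn hsub.1
    have h2 := layer μ hT hc hcT
    have hfin : (∫⁻ ω, ENNReal.ofReal (Real.log (1+T ω) - Real.log (1+c)) ∂μ) ≠ ⊤ :=
      hsub.lintegral_lt_top.ne
    constructor
    · rw [← h2]
      rw [integral_sub hTi (integrable_const _)] at h1
      have h3 : ∫ (_ : Ω), Real.log (1+c) ∂μ = Real.log (1+c) := by
        simp [measure_univ]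
      rw [h3] at h1
      linarith
    · rw [← h2]; exact hfin
  obtain ⟨hE₁, hL₁fin⟩ := EQ T₁ hT₁m hcT₁ hT₁i
  obtain ⟨hE₂, hL₂fin⟩ := EQ T₂ hT₂m hcT₂ hT₂i
  -- ### measure of tail events
  have hmeasT : ∀ (a b : ℝ), 0 ≤ a → 0 ≤ b → ∀ t : ℝ, c < t →
      μ {ω | t ≤ max (max (if a ≤ X ω then X ω else 0) (if b ≤ Y ω then Y ω else 0)) c}
        = ENNReal.ofReal (1 - max (F a) (F t) * max (F b) (F t)) := by
    intro a b ha hb t ht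
    have ht0 : 0 < t := lt_of_le_of_lt hc ht
    have hsets : {ω | max (max (if a ≤ X ω then X ω else 0) (if b ≤ Y ω then Y ω else 0)) c < t}
        = X ⁻¹' (Set.Iio (max a t)) ∩ Y ⁻¹' (Set.Iio (max b t)) := by
      ext ω
      simp only [Set.mem_setOf_eq, Set.mem_inter_iff, Set.mem_preimage, Set.mem_Iio, max_lt_iff]
      constructor
      · rintro ⟨⟨hU, hV⟩, _⟩
        constructor
        · by_cases hx : a ≤ X ω
          · rw [if_pos hx] at hU; exact lt_max_of_lt_right hU
          · push_neg at hx; exact lt_max_of_lt_left hx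
        · by_cases hy : b ≤ Y ω
          · rw [if_pos hy] at hV; exact lt_max_of_lt_right hV
          · push_neg at hy; exact lt_max_of_lt_left hy
      · rintro ⟨hXω, hYω⟩
        refine ⟨⟨?_, ?_⟩, ht⟩
        · by_cases hx : a ≤ X ω
          · rw [if_pos hx]
            rcases le_or_gt t a with h | h
            · rw [max_eq_left h] at hXω; linarith
            · rw [max_eq_right h.le] at hXω; exact hXω
          · rw [if_neg hx]; exact ht0
        · by_cases hy : b ≤ Y ω
          · rw [if_pos hy]
            rcases le_or_gt t b with h | h
            · rw [max_eq_left h] at hYω; linarith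
            · rw [max_eq_right h.le] at hYω; exact hYω
          · rw [if_neg hy]; exact ht0
    have hmeas : MeasurableSet {ω | max (max (if a ≤ X ω then X ω else 0)
        (if b ≤ Y ω then Y ω else 0)) c < t} := by
      rw [hsets]
      exact (hXm measurableSet_Iio).inter (hYm measurableSet_Iio)
    have hcompl : {ω | t ≤ max (max (if a ≤ X ω then X ω else 0)
        (if b ≤ Y ω then Y ω else 0)) c}
        = {ω | max (max (if a ≤ X ω then X ω else 0) (if b ≤ Y ω then Y ω else 0)) c < t}ᶜ := by
      ext ω; simp only [Set.mem_setOf_eq, Set.mem_compl_iff, not_lt]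
    rw [hcompl, measure_compl hmeas (measure_ne_top μ _), measure_univ, hsets,
      hindep.measure_inter_preimage_eq_mul _ _ measurableSet_Iio measurableSet_Iio]
    have hXp : X ⁻¹' (Set.Iio (max a t)) = {ω | X ω < max a t} := rfl
    have hYp : Y ⁻¹' (Set.Iio (max b t)) = {ω | Y ω < max b t} := rfl
    rw [hXp, hYp, hXlt, hYlt, hFmono'.map_max, hFmono'.map_max,
      ← ENNReal.ofReal_mul (le_max_of_le_right (hF0' t))]
    have hH0 : 0 ≤ max (F a) (F t) * max (F b) (F t) :=
      mul_nonneg (le_max_of_le_right (hF0' t)) (le_max_of_le_right (hF0' t))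
    rw [ENNReal.ofReal_sub 1 hH0, ENNReal.ofReal_one]
  have hm₁ : ∀ t : ℝ, c < t → μ {ω | t ≤ T₁ ω}
      = ENNReal.ofReal (1 - max (1-lam+q₁) (F t) * max (1-q₁) (F t)) := by
    intro t ht
    have := hmeasT a₁ b₁ ha₁0 hb₁0 t ht
    rw [hFa₁, hFb₁] at this
    exact this
  have hm₂ : ∀ t : ℝ, c < t → μ {ω | t ≤ T₂ ω}
      = ENNReal.ofReal (1 - max (1-lam+q₂) (F t) * max (1-q₂) (F t)) := by
    intro t ht
    have := hmeasT a₂ b₂ ha₂0 hb₂0 t ht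
    rw [hFa₂, hFb₂] at this
    exact this

  -- ### the key deterministic inequality
  have DKEY : 0 ≤ ∫ t in Set.Ioc c B,
      (max (1-lam+q₁) (F t) * max (1-q₁) (F t)
        - max (1-lam+q₂) (F t) * max (1-q₂) (F t)) * (1/(1+t)) := by
    have hid : ∀ t ∈ Set.Ioc c B,
        (max (1-lam+q₁) (F t) * max (1-q₁) (F t)
          - max (1-lam+q₂) (F t) * max (1-q₂) (F t)) * (1/(1+t))
        = ∫ q in Set.Ioc q₁ q₂, ((if 1-lam+q < F t ∧ F t < 1-q then F t else 0)
            - (if F t ≤ 1-lam+q then lam-2*q else 0)) * (1/(1+t)) := by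
      intro t _
      have hqid := q_identity lam q₁ q₂ (F t) hq₁0 hq₁₂ hq₂ (hF0' t) (hF1 t)
      rw [← intervalIntegral.integral_of_le hq₁₂, intervalIntegral.integral_mul_const, ← hqid]
    rw [MeasureTheory.setIntegral_congr_fun measurableSet_Ioc hid]
    have hΦmeas : AEStronglyMeasurable (Function.uncurry (fun t q : ℝ =>
        ((if 1-lam+q < F t ∧ F t < 1-q then F t else 0)
          - (if F t ≤ 1-lam+q then lam-2*q else 0)) * (1/(1+t))))
        ((volume.restrict (Set.Ioc c B)).prod (volume.restrict (Set.Ioc q₁ q₂))) := by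
      apply Measurable.aestronglyMeasurable
      show Measurable fun p : ℝ × ℝ =>
        ((if 1-lam+p.2 < F p.1 ∧ F p.1 < 1-p.2 then F p.1 else 0)
          - (if F p.1 ≤ 1-lam+p.2 then lam-2*p.2 else 0)) * (1/(1+p.1))
      have hFm : Measurable fun p : ℝ × ℝ => F p.1 := hFcont.measurable.comp measurable_fst
      apply Measurable.mul
      · apply Measurable.sub
        · exact Measurable.ite ((measurableSet_lt (by fun_prop) hFm).inter
            (measurableSet_lt hFm (by fun_prop))) hFm measurable_const
        · exact Measurable.ite (measurableSet_le hFm (by fun_prop)) (by fun_prop) measurable_const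
      · exact measurable_const.div (measurable_const.add measurable_fst)
    have hprod : Integrable (Function.uncurry (fun t q : ℝ =>
        ((if 1-lam+q < F t ∧ F t < 1-q then F t else 0)
          - (if F t ≤ 1-lam+q then lam-2*q else 0)) * (1/(1+t))))
        ((volume.restrict (Set.Ioc c B)).prod (volume.restrict (Set.Ioc q₁ q₂))) := by
      apply Integrable.mono' (g := fun _ => 1 + (|lam| + 2*|q₁| + 2*|q₂|)) ?_ hΦmeas
      · rw [Measure.prod_restrict]
        filter_upwards [ae_restrict_mem (measurableSet_Ioc.prod measurableSet_Ioc)] with p hp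
        obtain ⟨hpt, hpq⟩ := hp
        have ht0 : 0 < p.1 := lt_of_le_of_lt hc hpt.1
        have h1t : (0:ℝ) < 1 + p.1 := by linarith
        have hw1 : 1/(1+p.1) ≤ 1 := by rw [div_le_one h1t]; linarith
        have hw0 : (0:ℝ) ≤ 1/(1+p.1) := by positivity
        have hA : |(if 1-lam+p.2 < F p.1 ∧ F p.1 < 1-p.2 then F p.1 else 0)| ≤ 1 := by
          split
          · rw [abs_of_nonneg (hF0' _)]; exact hF1 _
          · simp
        have hq_abs : |p.2| ≤ |q₁| + |q₂| := by
          rw [abs_le]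
          constructor
          · have h1 := neg_abs_le q₁
            have h2 := abs_nonneg q₂
            linarith [hpq.1.le]
          · have h1 := le_abs_self q₂
            have h2 := abs_nonneg q₁
            linarith [hpq.2]
        have hB : |(if F p.1 ≤ 1-lam+p.2 then lam-2*p.2 else 0)|
            ≤ |lam| + 2*|q₁| + 2*|q₂| := by
          split
          · calc |lam - 2*p.2| ≤ |lam| + |2*p.2| := abs_sub _ _
              _ = |lam| + 2*|p.2| := by rw [abs_mul, abs_two]
              _ ≤ |lam| + 2*(|q₁|+|q₂|) := by linarith
              _ = |lam| + 2*|q₁| + 2*|q₂| := by ring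
          · simp only [abs_zero]; positivity
        show ‖((if 1-lam+p.2 < F p.1 ∧ F p.1 < 1-p.2 then F p.1 else 0)
          - (if F p.1 ≤ 1-lam+p.2 then lam-2*p.2 else 0)) * (1/(1+p.1))‖
            ≤ 1 + (|lam| + 2*|q₁| + 2*|q₂|)
        rw [Real.norm_eq_abs, abs_mul]
        have h1 : |(if 1-lam+p.2 < F p.1 ∧ F p.1 < 1-p.2 then F p.1 else 0)
            - (if F p.1 ≤ 1-lam+p.2 then lam-2*p.2 else 0)|
            ≤ 1 + (|lam| + 2*|q₁| + 2*|q₂|) := le_trans (abs_sub _ _) (by linarith)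
        have h2 : |1/(1+p.1)| ≤ 1 := by rw [abs_of_nonneg hw0]; exact hw1
        calc |(if 1-lam+p.2 < F p.1 ∧ F p.1 < 1-p.2 then F p.1 else 0)
            - (if F p.1 ≤ 1-lam+p.2 then lam-2*p.2 else 0)| * |1/(1+p.1)|
            ≤ (1 + (|lam| + 2*|q₁| + 2*|q₂|)) * 1 :=
              mul_le_mul h1 h2 (abs_nonneg _) (by positivity)
          _ = 1 + (|lam| + 2*|q₁| + 2*|q₂|) := mul_one _
      · rw [Measure.prod_restrict]
        refine integrableOn_const ?_
        rw [Measure.prod_prod]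
        exact (ENNReal.mul_lt_top measure_Ioc_lt_top measure_Ioc_lt_top).ne
    rw [MeasureTheory.integral_integral_swap hprod]
    apply MeasureTheory.setIntegral_nonneg measurableSet_Ioc
    intro q hq
    have hαq0 : (0:ℝ) ≤ 1-lam+q := by linarith [hq.1]
    have hαq1 : 1-lam+q < 1 := by linarith [hq.2]
    have hβq0 : (0:ℝ) ≤ 1-q := by linarith [hq.2]
    have hβq1 : 1-q < 1 := by linarith [hq.1]
    have hαβq : 1-lam+q ≤ 1-q := by linarith [hq.2]
    obtain ⟨hFaq, haq0⟩ := hFinv (1-lam+q) hαq0 hαq1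
    obtain ⟨hFbq, hbq0⟩ := hFinv (1-q) hβq0 hβq1
    have habq : Finv (1-lam+q) ≤ Finv (1-q) := hFinvmono _ _ hαq0 hβq1 hαβq
    have hbqb₁ : Finv (1-q) ≤ b₁ := by
      rw [hb₁def]
      exact hFinvmono _ _ hβq0 hβ₁1 (by linarith [hq.1])
    have hbqB : Finv (1-q) ≤ B := le_trans hbqb₁ hb₁B
    have hiff1 : ∀ t, 0 < t → (F t ≤ 1-lam+q ↔ t ≤ Finv (1-lam+q)) := by
      intro t ht
      constructor
      · intro hle
        by_contra hcon
        push_neg at hcon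
        have := hFmono (Set.mem_Ici.2 haq0) (Set.mem_Ici.2 ht.le) hcon
        rw [hFaq] at this
        linarith
      · intro hle
        have h := hFmono' hle
        rw [hFaq] at h
        exact h
    have hiff2 : ∀ t, 0 < t → (F t < 1-q ↔ t < Finv (1-q)) := by
      intro t ht
      constructor
      · intro hlt
        by_contra hcon
        push_neg at hcon
        have h := hFmono' hcon
        rw [hFbq] at h
        linarith
      · intro hlt
        have h := hFmono (Set.mem_Ici.2 ht.le) (Set.mem_Ici.2 hbq0) hlt
        rw [hFbq] at h
        exact h
    exact J_nonneg F f c B (Finv (1-lam+q)) (Finv (1-q)) (1-lam+q) (1-q) hc haq0 habq hbqB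
      hFcont hF0' hFmono' hFaq hFbq (hfpos _ haq0) hfnonneg hf_int hFdiff hdec hiff1 hiff2
      (lam-2*q) (by ring)
  -- ### compare the lintegrals
  have hwm : Measurable fun t : ℝ => 1/(1+t) :=
    measurable_const.div (measurable_const.add measurable_id)
  have hH₁m : Measurable fun t : ℝ =>
      (1 - max (1-lam+q₁) (F t) * max (1-q₁) (F t)) * (1/(1+t)) :=
    ((measurable_const.sub (((measurable_const.max hFcont.measurable)).mul
      ((measurable_const.max hFcont.measurable))))).mul hwm
  have hH₂m : Measurable fun t : ℝ =>
      (1 - max (1-lam+q₂) (F t) * max (1-q₂) (F t)) * (1/(1+t)) :=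
    ((measurable_const.sub (((measurable_const.max hFcont.measurable)).mul
      ((measurable_const.max hFcont.measurable))))).mul hwm
  have hbdd_int : ∀ (g : ℝ → ℝ), Measurable g → (∀ t ∈ Set.Ioc c B, |g t| ≤ 1) →
      IntegrableOn g (Set.Ioc c B) volume := by
    intro g hg hb
    apply Integrable.mono' (g := fun _ => (1:ℝ))
      (integrableOn_const measure_Ioc_lt_top.ne) hg.aestronglyMeasurable
    filter_upwards [ae_restrict_mem measurableSet_Ioc] with t ht
    rw [Real.norm_eq_abs]
    exact hb t ht
  have hHbound : ∀ (α β : ℝ), 0 ≤ α → α ≤ 1 → 0 ≤ β → β ≤ 1 → ∀ t ∈ Set.Ioc c B,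
      |(1 - max α (F t) * max β (F t)) * (1/(1+t))| ≤ 1 := by
    intro α β hα0 hα1 hβ0 hβ1 t ht
    have ht0 : 0 < t := lt_of_le_of_lt hc ht.1
    have h1t : (0:ℝ) < 1 + t := by linarith
    have hw1 : 1/(1+t) ≤ 1 := by rw [div_le_one h1t]; linarith
    have hw0 : (0:ℝ) ≤ 1/(1+t) := by positivity
    have hma : max α (F t) ≤ 1 := max_le hα1 (hF1 t)
    have hmb : max β (F t) ≤ 1 := max_le hβ1 (hF1 t)
    have hma0 : 0 ≤ max α (F t) := le_max_of_le_left hα0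
    have hmb0 : 0 ≤ max β (F t) := le_max_of_le_left hβ0
    have hprod1 : max α (F t) * max β (F t) ≤ 1 := by
      have := mul_le_mul hma hmb hmb0 zero_le_one
      linarith
    have hprod0 : 0 ≤ max α (F t) * max β (F t) := mul_nonneg hma0 hmb0
    rw [abs_mul, abs_of_nonneg hw0,
      abs_of_nonneg (by linarith : (0:ℝ) ≤ 1 - max α (F t) * max β (F t))]
    calc (1 - max α (F t) * max β (F t)) * (1/(1+t)) ≤ 1 * 1 :=
          mul_le_mul (by linarith) hw1 hw0 zero_le_one
      _ = 1 := mul_one 1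
  have hα₁le1 : 1-lam+q₁ ≤ 1 := by linarith
  have hα₂le1 : 1-lam+q₂ ≤ 1 := by linarith
  have hβ₁le1 : 1-q₁ ≤ 1 := by linarith
  have hβ₂le1 : 1-q₂ ≤ 1 := by linarith
  have hα₁0' : (0:ℝ) ≤ 1-lam+q₁ := by linarith
  have hα₂0' : (0:ℝ) ≤ 1-lam+q₂ := by linarith
  have hβ₁0' : (0:ℝ) ≤ 1-q₁ := by linarith
  have hβ₂0' : (0:ℝ) ≤ 1-q₂ := by linarith
  have hint₁ : IntegrableOn (fun t : ℝ =>
      (1 - max (1-lam+q₁) (F t) * max (1-q₁) (F t)) * (1/(1+t))) (Set.Ioc c B) volume :=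
    hbdd_int _ hH₁m (hHbound _ _ hα₁0' hα₁le1 hβ₁0' hβ₁le1)
  have hint₂ : IntegrableOn (fun t : ℝ =>
      (1 - max (1-lam+q₂) (F t) * max (1-q₂) (F t)) * (1/(1+t))) (Set.Ioc c B) volume :=
    hbdd_int _ hH₂m (hHbound _ _ hα₂0' hα₂le1 hβ₂0' hβ₂le1)
  have hreal : (∫ t in Set.Ioc c B, (1 - max (1-lam+q₁) (F t) * max (1-q₁) (F t)) * (1/(1+t)))
      ≤ ∫ t in Set.Ioc c B, (1 - max (1-lam+q₂) (F t) * max (1-q₂) (F t)) * (1/(1+t)) := by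
    have hsub : (∫ t in Set.Ioc c B, (1 - max (1-lam+q₂) (F t) * max (1-q₂) (F t)) * (1/(1+t)))
        - ∫ t in Set.Ioc c B, (1 - max (1-lam+q₁) (F t) * max (1-q₁) (F t)) * (1/(1+t))
        = ∫ t in Set.Ioc c B,
            (max (1-lam+q₁) (F t) * max (1-q₁) (F t)
              - max (1-lam+q₂) (F t) * max (1-q₂) (F t)) * (1/(1+t)) := by
      rw [← integral_sub hint₂ hint₁]
      apply MeasureTheory.setIntegral_congr_fun measurableSet_Ioc
      intro t _
      ring
    linarith [DKEY, hsub]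
  have hL₁L₂ : (∫⁻ t in Set.Ioi c, ENNReal.ofReal (1/(1+t)) * μ {ω | t ≤ T₁ ω})
      ≤ ∫⁻ t in Set.Ioi c, ENNReal.ofReal (1/(1+t)) * μ {ω | t ≤ T₂ ω} := by
    have hsplit : Set.Ioi c = Set.Ioc c B ∪ Set.Ioi B :=
      (Set.Ioc_union_Ioi_eq_Ioi hcB).symm
    rw [hsplit, lintegral_union measurableSet_Ioi (Set.Ioc_disjoint_Ioi le_rfl),
      lintegral_union measurableSet_Ioi (Set.Ioc_disjoint_Ioi le_rfl)]
    have hIocle : (∫⁻ t in Set.Ioc c B, ENNReal.ofReal (1/(1+t)) * μ {ω | t ≤ T₁ ω})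
        ≤ ∫⁻ t in Set.Ioc c B, ENNReal.ofReal (1/(1+t)) * μ {ω | t ≤ T₂ ω} := by
      have hc₁ : ∀ᵐ t ∂(volume : Measure ℝ), t ∈ Set.Ioc c B →
          ENNReal.ofReal (1/(1+t)) * μ {ω | t ≤ T₁ ω}
          = ENNReal.ofReal ((1 - max (1-lam+q₁) (F t) * max (1-q₁) (F t)) * (1/(1+t))) := by
        filter_upwards with t ht
        have ht0 : 0 < t := lt_of_le_of_lt hc ht.1
        have hw0 : (0:ℝ) ≤ 1/(1+t) := by positivity
        rw [hm₁ t ht.1, ← ENNReal.ofReal_mul hw0, mul_comm (1/(1+t))]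
      have hc₂ : ∀ᵐ t ∂(volume : Measure ℝ), t ∈ Set.Ioc c B →
          ENNReal.ofReal (1/(1+t)) * μ {ω | t ≤ T₂ ω}
          = ENNReal.ofReal ((1 - max (1-lam+q₂) (F t) * max (1-q₂) (F t)) * (1/(1+t))) := by
        filter_upwards with t ht
        have ht0 : 0 < t := lt_of_le_of_lt hc ht.1
        have hw0 : (0:ℝ) ≤ 1/(1+t) := by positivity
        rw [hm₂ t ht.1, ← ENNReal.ofReal_mul hw0, mul_comm (1/(1+t))]
      have e₁ := setLIntegral_congr_fun_ae (μ := volume) (s := Set.Ioc c B)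
        (f := fun t => ENNReal.ofReal (1/(1+t)) * μ {ω | t ≤ T₁ ω})
        (g := fun t => ENNReal.ofReal
          ((1 - max (1-lam+q₁) (F t) * max (1-q₁) (F t)) * (1/(1+t))))
        measurableSet_Ioc hc₁
      have e₂ := setLIntegral_congr_fun_ae (μ := volume) (s := Set.Ioc c B)
        (f := fun t => ENNReal.ofReal (1/(1+t)) * μ {ω | t ≤ T₂ ω})
        (g := fun t => ENNReal.ofReal
          ((1 - max (1-lam+q₂) (F t) * max (1-q₂) (F t)) * (1/(1+t))))
        measurableSet_Ioc hc₂
      rw [e₁, e₂]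
      have hpos₁ : 0 ≤ᵐ[volume.restrict (Set.Ioc c B)] fun t : ℝ =>
          (1 - max (1-lam+q₁) (F t) * max (1-q₁) (F t)) * (1/(1+t)) := by
        filter_upwards [ae_restrict_mem measurableSet_Ioc] with t ht
        have ht0 : 0 < t := lt_of_le_of_lt hc ht.1
        have hw0 : (0:ℝ) ≤ 1/(1+t) := by positivity
        have hma : max (1-lam+q₁) (F t) ≤ 1 := max_le hα₁le1 (hF1 t)
        have hmb : max (1-q₁) (F t) ≤ 1 := max_le hβ₁le1 (hF1 t)
        have hma0 : 0 ≤ max (1-lam+q₁) (F t) := le_max_of_le_left hα₁0'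
        have hmb0 : 0 ≤ max (1-q₁) (F t) := le_max_of_le_left hβ₁0'
        have hp1 : max (1-lam+q₁) (F t) * max (1-q₁) (F t) ≤ 1 := by
          have := mul_le_mul hma hmb hmb0 zero_le_one
          linarith
        exact mul_nonneg (by linarith) hw0
      have hpos₂ : 0 ≤ᵐ[volume.restrict (Set.Ioc c B)] fun t : ℝ =>
          (1 - max (1-lam+q₂) (F t) * max (1-q₂) (F t)) * (1/(1+t)) := by
        filter_upwards [ae_restrict_mem measurableSet_Ioc] with t ht
        have ht0 : 0 < t := lt_of_le_of_lt hc ht.1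
        have hw0 : (0:ℝ) ≤ 1/(1+t) := by positivity
        have hma : max (1-lam+q₂) (F t) ≤ 1 := max_le hα₂le1 (hF1 t)
        have hmb : max (1-q₂) (F t) ≤ 1 := max_le hβ₂le1 (hF1 t)
        have hma0 : 0 ≤ max (1-lam+q₂) (F t) := le_max_of_le_left hα₂0'
        have hmb0 : 0 ≤ max (1-q₂) (F t) := le_max_of_le_left hβ₂0'
        have hp1 : max (1-lam+q₂) (F t) * max (1-q₂) (F t) ≤ 1 := by
          have := mul_le_mul hma hmb hmb0 zero_le_one
          linarith
        exact mul_nonneg (by linarith) hw0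
      rw [← MeasureTheory.ofReal_integral_eq_lintegral_ofReal hint₁ hpos₁,
        ← MeasureTheory.ofReal_integral_eq_lintegral_ofReal hint₂ hpos₂]
      exact ENNReal.ofReal_le_ofReal hreal
    have hIoieq : (∫⁻ t in Set.Ioi B, ENNReal.ofReal (1/(1+t)) * μ {ω | t ≤ T₁ ω})
        = ∫⁻ t in Set.Ioi B, ENNReal.ofReal (1/(1+t)) * μ {ω | t ≤ T₂ ω} := by
      apply setLIntegral_congr_fun_ae measurableSet_Ioi
      filter_upwards with t ht
      have htc : c < t := lt_of_le_of_lt hcB ht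
      have hFtb₁ : 1 - q₁ ≤ F t := by
        rw [← hFb₁]
        exact hFmono' (le_trans hb₁B (le_of_lt ht))
      rw [hm₁ t htc, hm₂ t htc,
        max_eq_right (le_trans (by linarith) hFtb₁ : 1-lam+q₁ ≤ F t),
        max_eq_right hFtb₁,
        max_eq_right (le_trans (by linarith) hFtb₁ : 1-lam+q₂ ≤ F t),
        max_eq_right (le_trans (by linarith) hFtb₁ : 1-q₂ ≤ F t)]
    rw [hIoieq]
    exact add_le_add hIocle le_rfl
  rw [hE₁, hE₂]
  have := ENNReal.toReal_mono hL₂fin hL₁L₂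
  linarith
end

section
/- Let M ≥ 2 be an integer and ρ > 0, and define f(x) = e^{−x/ρ}·(1+x)^{−M}·[ (1+x)/ρ + M − 1 ] for x ≥ 0 (the density of the SINR on a beam in a Rayleigh-fading system with M random orthonormal beams and noise power 1/ρ). Then f′(x) ≤ −f(x)/(1+x) for all x ≥ 0. -/
/-!
STATEMENT 10: for the multi-beam (`M ≥ 2`) Rayleigh-fading SINR density
`f(x) = e^{−x/ρ}·(1+x)^{−M}·[(1+x)/ρ + M − 1]`, `x ≥ 0`, the condition
`f′(x) ≤ −f(x)/(1+x)` holds for all `x ≥ 0` (for every noise level `1/ρ`, `ρ > 0`).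
-/

theorem multibeam_density_condition (M : ℕ) (hM : 2 ≤ M) (ρ : ℝ) (hρ : 0 < ρ) :
    ∀ x : ℝ, 0 ≤ x →
      deriv (fun y : ℝ =>
          Real.exp (-y / ρ) / (1 + y) ^ M * ((1 + y) / ρ + M - 1)) x
        ≤ - (Real.exp (-x / ρ) / (1 + x) ^ M * ((1 + x) / ρ + M - 1)) / (1 + x) := by
  intro x hx
  have h1x : (0:ℝ) < 1 + x := by linarith
  have hpow : (0:ℝ) < (1 + x) ^ M := pow_pos h1x M
  have hpow' : (0:ℝ) < (1 + x) ^ (M - 1) := pow_pos h1x _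
  have hexp : (0:ℝ) < Real.exp (-x / ρ) := Real.exp_pos _
  have hu : HasDerivAt (fun y : ℝ => Real.exp (-y / ρ))
      (Real.exp (-x / ρ) * (-1 / ρ)) x := by
    have : HasDerivAt (fun y : ℝ => -y / ρ) (-1 / ρ) x := by
      simpa using ((hasDerivAt_id x).neg.div_const ρ)
    simpa [mul_comm] using this.exp
  have hv : HasDerivAt (fun y : ℝ => (1 + y) ^ M)
      ((M : ℝ) * (1 + x) ^ (M - 1)) x := by
    have := ((hasDerivAt_id x).const_add 1).pow M
    simp at this
    exact this
  have hw := hu.div hv (ne_of_gt hpow)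
  have hg : HasDerivAt (fun y : ℝ => (1 + y) / ρ + (M : ℝ) - 1) (1 / ρ) x := by
    have : HasDerivAt (fun y : ℝ => (1 + y) / ρ) (1 / ρ) x := by
      simpa using ((hasDerivAt_id x).const_add 1).div_const ρ
    simpa using (this.add_const (M : ℝ)).sub_const 1
  have hf := hw.mul hg
  rw [(show HasDerivAt (fun y : ℝ => Real.exp (-y / ρ) / (1 + y) ^ M * ((1 + y) / ρ + M - 1)) _ x from hf).deriv]
  simp only [Pi.div_apply]
  set E := Real.exp (-x / ρ) with hE
  have hP : (1 + x) ^ M = (1 + x) ^ (M - 1) * (1 + x) := by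
    rw [← pow_succ]
    congr 1
    omega
  set t := (1 + x) ^ (M - 1) with ht
  rw [hP]
  have hM2 : (2:ℝ) ≤ (M:ℝ) := by exact_mod_cast hM
  have hG : (1:ℝ) ≤ (1 + x) / ρ + (M:ℝ) - 1 := by
    have : 0 ≤ (1 + x) / ρ := by positivity
    linarith
  have htne : t ≠ 0 := ne_of_gt hpow'
  have h1ne : (1 + x) ≠ 0 := ne_of_gt h1x
  have hρne : ρ ≠ 0 := ne_of_gt hρ
  set G := (1 + x) / ρ + (M : ℝ) - 1 with hGdef
  have hdiff : -(E / (t * (1 + x)) * G) / (1 + x) -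
      ((E * (-1 / ρ) * (t * (1 + x)) - E * ((M : ℝ) * t)) / (t * (1 + x)) ^ 2 * G +
        E / (t * (1 + x)) * (1 / ρ))
      = E / (t * (1 + x)) * ((G - 1) / ρ + ((M : ℝ) - 1) * G / (1 + x)) := by
    field_simp
    ring
  have h1 : 0 ≤ (G - 1) / ρ := div_nonneg (by linarith) hρ.le
  have h2 : 0 ≤ ((M : ℝ) - 1) * G / (1 + x) :=
    div_nonneg (mul_nonneg (by linarith) (by linarith)) h1x.le
  have h3 : 0 ≤ E / (t * (1 + x)) * ((G - 1) / ρ + ((M : ℝ) - 1) * G / (1 + x)) :=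
    mul_nonneg (div_nonneg hexp.le (by positivity)) (by linarith)
  linarith
end

section
/- Let M ≥ 1 be an integer and ρ > 0. Let Z, W₁, …, W_{M−1} be independent random variables, each exponentially distributed with rate 1, and define the SINR γ = Z / ( 1/ρ + Σ_{k=1}^{M−1} W_k ). Then for every x ≥ 0, P(γ > x) = e^{−x/ρ} / (1+x)^{M−1}; that is, γ has cumulative distribution function F(x) = 1 − e^{−x/ρ}/(1+x)^{M−1} on [0,∞). -/
/-!
STATEMENT 12: if `Z, W₁, …, W_{M−1}` are independent rate-1 exponential random
variables and `γ = Z / (1/ρ + Σ_k W_k)` (the SINR on one of `M` random orthonormal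
beams in a Rayleigh fading environment with noise power `1/ρ`), then for every
`x ≥ 0`, `P(γ > x) = e^{−x/ρ}/(1+x)^{M−1}`; that is, `γ` has cdf
`F(x) = 1 − e^{−x/ρ}/(1+x)^{M−1}` on `[0,∞)`.

Mutual independence of the family `Z, W₁, …, W_{M−1}` is phrased as
`iIndepFun` of the family indexed by `Option (Fin (M−1))`, where `none ↦ Z` and
`some k ↦ W k`.
-/

open MeasureTheory ProbabilityTheory Real Set

section Aux

variable {Ω : Type*} [MeasurableSpace Ω] {μ : Measure Ω} [IsProbabilityMeasure μ]

/-- A random variable whose CDF is `1 - exp(-t)` on `[0,∞)` has law `expMeasure 1`. -/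
lemma aux_map_eq_expMeasure (X : Ω → ℝ) (hXm : Measurable X)
    (hX : ∀ t : ℝ, (μ {ω | X ω ≤ t}).toReal = if 0 ≤ t then 1 - Real.exp (-t) else 0) :
    μ.map X = expMeasure 1 := by
  have hmap : IsProbabilityMeasure (μ.map X) := Measure.isProbabilityMeasure_map hXm.aemeasurable
  have hexp : IsProbabilityMeasure (expMeasure 1) := isProbabilityMeasure_expMeasure one_pos
  refine MeasureTheory.Measure.ext_of_Iic _ _ (fun a => ?_)
  rw [← ENNReal.toReal_eq_toReal_iff' (measure_ne_top _ _) (measure_ne_top _ _)]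
  have h1 : (μ.map X) (Iic a) = μ {ω | X ω ≤ a} := by
    rw [Measure.map_apply hXm measurableSet_Iic]; rfl
  have h2 : ((expMeasure 1) (Iic a)).toReal = if 0 ≤ a then 1 - Real.exp (-a) else 0 := by
    have := cdf_expMeasure_eq one_pos a
    rwa [cdf_eq_real, measureReal_def, one_mul] at this
  rw [h1, h2, hX a]

lemma aux_expMeasure_Iic {t : ℝ} (ht : 0 ≤ t) :
    (expMeasure 1) (Iic t) = ENNReal.ofReal (1 - Real.exp (-t)) := by
  have hexp : IsProbabilityMeasure (expMeasure 1) := isProbabilityMeasure_expMeasure one_pos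
  have h2 : ((expMeasure 1) (Iic t)).toReal = 1 - Real.exp (-t) := by
    have := cdf_expMeasure_eq one_pos t
    rw [cdf_eq_real, measureReal_def, one_mul, if_pos ht] at this
    exact this
  rw [← h2, ENNReal.ofReal_toReal (measure_ne_top _ _)]

lemma aux_exp_le_one {t : ℝ} (ht : 0 ≤ t) : Real.exp (-t) ≤ 1 := by
  rw [← Real.exp_zero]; exact Real.exp_le_exp.mpr (by linarith)

/-- Tail of the rate-1 exponential law. -/
lemma aux_expMeasure_Ioi {t : ℝ} (ht : 0 ≤ t) :
    (expMeasure 1) (Ioi t) = ENNReal.ofReal (Real.exp (-t)) := by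
  have hexp : IsProbabilityMeasure (expMeasure 1) := isProbabilityMeasure_expMeasure one_pos
  have hcompl : (Iic t)ᶜ = Ioi t := compl_Iic
  rw [← hcompl, measure_compl measurableSet_Iic (measure_ne_top _ _), measure_univ,
    aux_expMeasure_Iic ht]
  refine ENNReal.sub_eq_of_eq_add (by simp) ?_
  rw [← ENNReal.ofReal_add (Real.exp_nonneg _) (by linarith [aux_exp_le_one ht])]
  norm_num

/-- A rate-1 exponential random variable is a.s. nonnegative. -/
lemma aux_ae_nonneg (X : Ω → ℝ) (hXm : Measurable X)
    (hmap : μ.map X = expMeasure 1) : ∀ᵐ ω ∂μ, 0 ≤ X ω := by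
  have h0 : μ {ω | X ω < 0} = 0 := by
    have h1 : μ {ω | X ω < 0} = (μ.map X) (Iio 0) := by
      rw [Measure.map_apply hXm measurableSet_Iio]; rfl
    rw [h1, hmap]
    show (gammaMeasure 1 1) (Iio 0) = 0
    rw [gammaMeasure, withDensity_apply _ measurableSet_Iio]
    exact lintegral_gammaPDF_of_nonpos le_rfl
  rw [ae_iff]
  convert h0 using 2
  ext ω; simp [not_le]

lemma aux_measurable_exponentialPDF (r : ℝ) : Measurable (exponentialPDF r) :=
  (measurable_exponentialPDFReal r).ennreal_ofReal

/-- Laplace transform of the rate-1 exponential law. -/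
lemma aux_lintegral_exp_expMeasure {x : ℝ} (hx : 0 ≤ x) :
    ∫⁻ z, ENNReal.ofReal (Real.exp (-(x * z))) ∂(expMeasure 1)
      = ENNReal.ofReal (1 / (1 + x)) := by
  have h1x : 0 < 1 + x := by linarith
  have hpdf : Measurable fun z => ENNReal.ofReal (Real.exp (-(x * z))) :=
    ((measurable_id.const_mul x).neg.exp).ennreal_ofReal
  rw [show expMeasure 1 = volume.withDensity (exponentialPDF 1) from rfl,
    lintegral_withDensity_eq_lintegral_mul _ (aux_measurable_exponentialPDF 1) hpdf]
  have hcongr : ∀ z : ℝ, (exponentialPDF 1 * fun z => ENNReal.ofReal (Real.exp (-(x * z)))) z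
      = ENNReal.ofReal (1 / (1 + x)) * exponentialPDF (1 + x) z := by
    intro z
    rcases lt_or_ge z 0 with hz | hz
    · simp [exponentialPDF_of_neg hz]
    · rw [Pi.mul_apply, exponentialPDF_of_nonneg hz, exponentialPDF_of_nonneg hz,
        ← ENNReal.ofReal_mul (by positivity), ← ENNReal.ofReal_mul (by positivity)]
      congr 1
      rw [one_mul, ← Real.exp_add]
      field_simp
      ring_nf
  rw [lintegral_congr hcongr, lintegral_const_mul _ (aux_measurable_exponentialPDF (1 + x)),
    lintegral_exponentialPDF_eq_one h1x, mul_one]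

/-- The mgf of a rate-1 exponential random variable at `-x`. -/
lemma aux_mgf (X : Ω → ℝ) (hXm : Measurable X) (hmap : μ.map X = expMeasure 1)
    {x : ℝ} (hx : 0 ≤ x) : mgf X μ (-x) = 1 / (1 + x) := by
  have h1x : 0 < 1 + x := by linarith
  have hmeas : Measurable fun z : ℝ => ENNReal.ofReal (Real.exp (-x * z)) :=
    ((measurable_id.const_mul (-x)).exp).ennreal_ofReal
  have h1 : mgf X μ (-x) = ∫ ω, Real.exp (-x * X ω) ∂μ := rfl
  rw [h1, integral_eq_lintegral_of_nonneg_ae (ae_of_all _ fun ω => Real.exp_nonneg _)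
    ((hXm.const_mul (-x)).exp).aestronglyMeasurable]
  have h2 : ∫⁻ ω, ENNReal.ofReal (Real.exp (-x * X ω)) ∂μ
      = ∫⁻ z, ENNReal.ofReal (Real.exp (-x * z)) ∂(μ.map X) :=
    (lintegral_map hmeas hXm).symm
  rw [h2, hmap]
  have h3 : ∫⁻ z, ENNReal.ofReal (Real.exp (-x * z)) ∂(expMeasure 1)
      = ENNReal.ofReal (1 / (1 + x)) := by
    simp_rw [neg_mul]
    exact aux_lintegral_exp_expMeasure hx
  rw [h3, ENNReal.toReal_ofReal (by positivity)]

end Aux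

theorem sinr_distribution_rayleigh
    {Ω : Type*} [MeasurableSpace Ω] (μ : Measure Ω) [IsProbabilityMeasure μ]
    (M : ℕ) (hM : 1 ≤ M) (ρ : ℝ) (hρ : 0 < ρ)
    (Z : Ω → ℝ) (W : Fin (M - 1) → Ω → ℝ)
    (hZm : Measurable Z) (hWm : ∀ k, Measurable (W k))
    (hindep : iIndepFun
      (fun o : Option (Fin (M - 1)) => o.elim Z fun k => W k) μ)
    (hZ : ∀ t : ℝ, (μ {ω | Z ω ≤ t}).toReal = if 0 ≤ t then 1 - Real.exp (-t) else 0)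
    (hW : ∀ k, ∀ t : ℝ,
      (μ {ω | W k ω ≤ t}).toReal = if 0 ≤ t then 1 - Real.exp (-t) else 0) :
    ∀ x : ℝ, 0 ≤ x →
      (μ {ω | x < Z ω / (1 / ρ + ∑ k, W k ω)}).toReal
          = Real.exp (-x / ρ) / (1 + x) ^ (M - 1)
      ∧ (μ {ω | Z ω / (1 / ρ + ∑ k, W k ω) ≤ x}).toReal
          = 1 - Real.exp (-x / ρ) / (1 + x) ^ (M - 1) := by
  classical
  intro x hx
  set f : Option (Fin (M - 1)) → Ω → ℝ := fun o => o.elim Z fun k => W k with hf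
  have hfm : ∀ o, Measurable (f o) := by rintro (_ | k); exacts [hZm, hWm k]
  -- laws
  have hZmap : μ.map Z = expMeasure 1 := aux_map_eq_expMeasure Z hZm hZ
  have hWmap : ∀ k, μ.map (W k) = expMeasure 1 := fun k =>
    aux_map_eq_expMeasure (W k) (hWm k) (hW k)
  -- the interference-plus-noise
  set S : Ω → ℝ := fun ω => 1 / ρ + ∑ k, W k ω with hSdef
  have hSm : Measurable S := by
    apply Measurable.add measurable_const
    exact Finset.measurable_sum _ fun k _ => hWm k
  -- a.s. positivity of S
  have hWnn : ∀ᵐ ω ∂μ, ∀ k, 0 ≤ W k ω :=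
    (ae_all_iff).mpr fun k => aux_ae_nonneg (W k) (hWm k) (hWmap k)
  have hSpos : ∀ᵐ ω ∂μ, 0 < S ω := by
    filter_upwards [hWnn] with ω hω
    have : (0:ℝ) ≤ ∑ k, W k ω := Finset.sum_nonneg fun k _ => hω k
    have h0 : 0 < 1 / ρ := by positivity
    simp only [hSdef]; linarith
  have hSnn : ∀ᵐ ω ∂μ, 0 ≤ S ω := hSpos.mono fun ω h => h.le
  -- independence of S and Z
  have hSZindep : IndepFun S Z μ := by
    have hdisj : Disjoint (Finset.univ.map (Function.Embedding.some (α := Fin (M - 1))))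
        ({none} : Finset (Option (Fin (M - 1)))) := by
      simp [Finset.disjoint_right]
    have hbase := hindep.indepFun_finset _ _ hdisj hfm
    have := hbase.comp
      (φ := fun v : ((i : (Finset.univ.map (Function.Embedding.some (α := Fin (M - 1))))) → ℝ) =>
        1 / ρ + ∑ k : Fin (M - 1), v ⟨some k, by simp⟩)
      (ψ := fun v : ((i : ({none} : Finset (Option (Fin (M - 1))))) → ℝ) =>
        v ⟨none, by simp⟩) (_mγ' := Real.measurableSpace)
      (by
        apply Measurable.add measurable_const
        exact Finset.measurable_sum _ fun k _ => measurable_pi_apply _)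
      (measurable_pi_apply _)
    exact this
  -- independence of the W family
  have hWindep : iIndepFun W μ := by
    rw [iIndepFun_iff_measure_inter_preimage_eq_mul]
    intro T sets hsets
    have key := hindep.measure_inter_preimage_eq_mul
      (T.map (Function.Embedding.some (α := Fin (M - 1))))
      (sets := fun o => Option.elim o Set.univ sets)
      (by
        rintro (_ | i) hi
        · simp at hi
        · simp only [Finset.mem_map, Function.Embedding.some_apply] at hi
          obtain ⟨j, hj, hji⟩ := hi
          cases hji
          exact hsets _ hj)
    calc μ (⋂ i ∈ T, W i ⁻¹' sets i)
        = μ (⋂ o ∈ T.map (Function.Embedding.some (α := Fin (M - 1))),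
            f o ⁻¹' (Option.elim o Set.univ sets)) := by
          congr 1
          ext ω
          simp [hf]
      _ = ∏ o ∈ T.map (Function.Embedding.some (α := Fin (M - 1))),
            μ (f o ⁻¹' (Option.elim o Set.univ sets)) := key
      _ = ∏ i ∈ T, μ (W i ⁻¹' sets i) := by rw [Finset.prod_map]; rfl
  -- step 1: reduce to {x * S < Z}
  have hsets_eq : {ω | x < Z ω / S ω} =ᵐ[μ] {ω | x * S ω < Z ω} := by
    filter_upwards [hSpos] with ω hω
    simp only [Set.mem_setOf_eq, eq_iff_iff]
    exact lt_div_iff₀ hω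
  have hAmeas : MeasurableSet {p : ℝ × ℝ | x * p.1 < p.2} :=
    measurableSet_lt (measurable_fst.const_mul x) measurable_snd
  -- step 2: product measure computation
  have hmapprod : μ.map (fun ω => (S ω, Z ω)) = (μ.map S).prod (μ.map Z) :=
    (indepFun_iff_map_prod_eq_prod_map_map hSm.aemeasurable hZm.aemeasurable).mp hSZindep
  have hmain : μ {ω | x * S ω < Z ω}
      = ∫⁻ s, (μ.map Z) (Ioi (x * s)) ∂(μ.map S) := by
    have h1 : μ {ω | x * S ω < Z ω}
        = (μ.map fun ω => (S ω, Z ω)) {p : ℝ × ℝ | x * p.1 < p.2} := by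
      rw [Measure.map_apply (hSm.prodMk hZm) hAmeas]; rfl
    rw [h1, hmapprod, Measure.prod_apply hAmeas]
    rfl
  -- step 3: compute the integrand a.e.
  have hZtail : ∀ s : ℝ, 0 ≤ s → (μ.map Z) (Ioi (x * s)) = ENNReal.ofReal (Real.exp (-(x * s))) := by
    intro s hs
    rw [hZmap]
    exact aux_expMeasure_Ioi (by positivity)
  have hae_map : ∀ᵐ s ∂(μ.map S), 0 ≤ s := by
    rw [ae_map_iff hSm.aemeasurable (measurableSet_Ici (a := (0:ℝ)))]
    exact hSnn
  have hcongr : ∫⁻ s, (μ.map Z) (Ioi (x * s)) ∂(μ.map S)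
      = ∫⁻ s, ENNReal.ofReal (Real.exp (-(x * s))) ∂(μ.map S) := by
    refine lintegral_congr_ae ?_
    filter_upwards [hae_map] with s hs
    exact hZtail s hs
  have hback : ∫⁻ s, ENNReal.ofReal (Real.exp (-(x * s))) ∂(μ.map S)
      = ∫⁻ ω, ENNReal.ofReal (Real.exp (-(x * S ω))) ∂μ :=
    lintegral_map (((measurable_id.const_mul x).neg.exp).ennreal_ofReal) hSm
  -- step 4: integrability and Bochner integral
  have hint : Integrable (fun ω => Real.exp (-(x * S ω))) μ := by
    refine Integrable.mono' (integrable_const 1) ((hSm.const_mul x).neg.exp).aestronglyMeasurable ?_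
    filter_upwards [hSnn] with ω hω
    rw [Real.norm_eq_abs, abs_of_pos (Real.exp_pos _)]
    exact aux_exp_le_one (by positivity)
  have hofReal : ∫⁻ ω, ENNReal.ofReal (Real.exp (-(x * S ω))) ∂μ
      = ENNReal.ofReal (∫ ω, Real.exp (-(x * S ω)) ∂μ) :=
    (ofReal_integral_eq_lintegral_ofReal hint (ae_of_all _ fun ω => Real.exp_nonneg _)).symm
  -- step 5: factor out the constant and use the mgf
  have hmgf_val : ∀ k, mgf (W k) μ (-x) = 1 / (1 + x) := fun k =>
    aux_mgf (W k) (hWm k) (hWmap k) hx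
  have hmgf_sum : mgf (∑ k, W k) μ (-x) = (1 / (1 + x)) ^ (M - 1) := by
    rw [hWindep.mgf_sum hWm Finset.univ]
    simp [hmgf_val, Finset.prod_const, Finset.card_univ]
  have hintegral : ∫ ω, Real.exp (-(x * S ω)) ∂μ
      = Real.exp (-x / ρ) * (1 / (1 + x)) ^ (M - 1) := by
    have hsplit : ∀ ω, Real.exp (-(x * S ω))
        = Real.exp (-x / ρ) * Real.exp (-x * (∑ k, W k) ω) := by
      intro ω
      rw [← Real.exp_add]
      congr 1
      simp only [hSdef, Finset.sum_apply]
      field_simp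
      ring
    have hmgf_sum' : ∫ ω, Real.exp (-x * (∑ k, W k) ω) ∂μ = (1 / (1 + x)) ^ (M - 1) := by
      rw [show (∫ ω, Real.exp (-x * (∑ k, W k) ω) ∂μ) = mgf (∑ k, W k) μ (-x) from rfl]
      exact hmgf_sum
    simp_rw [hsplit]
    rw [integral_const_mul, hmgf_sum']
  have h1x : 0 < 1 + x := by linarith
  have hfinal_val : Real.exp (-x / ρ) * (1 / (1 + x)) ^ (M - 1)
      = Real.exp (-x / ρ) / (1 + x) ^ (M - 1) := by
    rw [div_pow, one_pow, mul_one_div]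
  -- assemble part 1
  have hmeasset : MeasurableSet {ω | x < Z ω / S ω} := by
    apply measurableSet_lt measurable_const
    exact hZm.div hSm
  have hpart1 : μ {ω | x < Z ω / S ω}
      = ENNReal.ofReal (Real.exp (-x / ρ) / (1 + x) ^ (M - 1)) := by
    rw [measure_congr hsets_eq, hmain, hcongr, hback, hofReal, hintegral, hfinal_val]
  have hpart1' : (μ {ω | x < Z ω / S ω}).toReal = Real.exp (-x / ρ) / (1 + x) ^ (M - 1) := by
    rw [hpart1, ENNReal.toReal_ofReal (by positivity)]
  refine ⟨hpart1', ?_⟩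
  -- part 2: complement
  have hcompl : {ω | Z ω / S ω ≤ x} = {ω | x < Z ω / S ω}ᶜ := by
    ext ω; simp [not_lt]
  rw [show {ω | Z ω / (1 / ρ + ∑ k, W k ω) ≤ x} = {ω | Z ω / S ω ≤ x} from rfl, hcompl,
    measure_compl hmeasset (measure_ne_top _ _), measure_univ,
    ENNReal.toReal_sub_of_le prob_le_one ENNReal.one_ne_top, ENNReal.toReal_one, hpart1']
end
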